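/- Let y ∈ V^n be a probability vector with positive components, let 1 < d < n−1 with y_1 > y_d and y_{d+1} > y_n (so that K_d(y) is nonempty), and let k be a positive integer. Then for every x ∈ K_d(y): x^{⊗k} ◁ y^{⊗k} if and only if y_d^k < y_1^{k−1} y_{d+1} and y_{d+1}^k > y_d y_n^{k−1}. -/

import Mathlib

noncomputable section

/-- `eSum x l` : the sum of the `l` largest components of `x`. -/
def eSum {n : ℕ} (x : Fin n → ℝ) (l : ℕ) : ℝ :=
  sSup {r | ∃ s : Finset (Fin n), s.card = l ∧ r = ∑ i ∈ s, x i}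

/-- `ESum x l` : the sum of the `l` smallest components of `x`. -/
def ESum {n : ℕ} (x : Fin n → ℝ) (l : ℕ) : ℝ :=
  sInf {r | ∃ s : Finset (Fin n), s.card = l ∧ r = ∑ i ∈ s, x i}

/-- Majorization `x ≺ y` (for vectors with equal total sum):
`e_l(x) ≤ e_l(y)` for all `1 ≤ l ≤ n`. -/
def Maj {n : ℕ} (x y : Fin n → ℝ) : Prop :=
  (∑ i, x i) = (∑ i, y i) ∧ ∀ l : ℕ, 1 ≤ l → l ≤ n → eSum x l ≤ eSum y l

/-- Strict majorization `x ◁ y`: equal total sums and `e_l(x) < e_l(y)` for all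
`1 ≤ l ≤ n - 1`. -/
def SMaj {n : ℕ} (x y : Fin n → ℝ) : Prop :=
  (∑ i, x i) = (∑ i, y i) ∧ ∀ l : ℕ, 1 ≤ l → l + 1 ≤ n → eSum x l < eSum y l

/-- Super-majorization `x ≺ʷ y` : `E_l(x) ≥ E_l(y)` for all `1 ≤ l ≤ n`. -/
def SupMaj {n : ℕ} (x y : Fin n → ℝ) : Prop :=
  ∀ l : ℕ, 1 ≤ l → l ≤ n → ESum y l ≤ ESum x l

/-- Strict super-majorization `x ◁ʷ y` : `E_l(x) > E_l(y)` for all `1 ≤ l ≤ n`. -/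
def SSupMaj {n : ℕ} (x y : Fin n → ℝ) : Prop :=
  ∀ l : ℕ, 1 ≤ l → l ≤ n → ESum y l < ESum x l

/-- Tensor product of two vectors: the vector of all pairwise products. -/
def tensor {m k : ℕ} (x : Fin m → ℝ) (c : Fin k → ℝ) : Fin (m * k) → ℝ :=
  fun i => x (finProdFinEquiv.symm i).1 * c (finProdFinEquiv.symm i).2

/-- `k`-fold tensor power of a vector. -/
def tpow {n : ℕ} (x : Fin n → ℝ) (k : ℕ) : Fin (n ^ k) → ℝ :=
  fun i => ∏ j : Fin k, x (finFunctionFinEquiv.symm i j)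

/-- `V^n` : probability vectors with components in non-increasing order. -/
def Vn (n : ℕ) : Set (Fin n → ℝ) :=
  {x | (∀ i, 0 ≤ x i) ∧ (∑ i, x i) = 1 ∧ Antitone x}

/-- `S(y)` : members of `V^n` majorized by `y`. -/
def Sset {n : ℕ} (y : Fin n → ℝ) : Set (Fin n → ℝ) :=
  {x ∈ Vn n | Maj x y}

/-- `T(y,c)` : members of `V^n` with `x ⊗ c ≺ y ⊗ c`. -/
def Tcat {n k : ℕ} (y : Fin n → ℝ) (c : Fin k → ℝ) : Set (Fin n → ℝ) :=
  {x ∈ Vn n | Maj (tensor x c) (tensor y c)}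

/-- Local uniformity `l_u(c)` : the minimum of the consecutive ratios `c_{i+1}/c_i`. -/
def lu {k : ℕ} (c : Fin k → ℝ) : ℝ :=
  sInf {r | ∃ i : ℕ, ∃ h : i + 1 < k, r = c ⟨i + 1, h⟩ / c ⟨i, Nat.lt_of_succ_lt h⟩}

/-- Global uniformity `g_u(c) = c_k / c_1` (smallest over largest component of a
non-increasingly ordered vector). -/
def gu {k : ℕ} (c : Fin k → ℝ) : ℝ :=
  if h : 0 < k then c ⟨k - 1, Nat.sub_lt h Nat.one_pos⟩ / c ⟨0, h⟩ else 1

/-- Largest component. -/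
def maxc {n : ℕ} (x : Fin n → ℝ) : ℝ := sSup (Set.range x)

/-- Smallest component. -/
def minc {n : ℕ} (x : Fin n → ℝ) : ℝ := sInf (Set.range x)

/-- `c'` is a (contiguous) segment of `c`. -/
def IsSegment {j k : ℕ} (c' : Fin j → ℝ) (c : Fin k → ℝ) : Prop :=
  ∃ (i : ℕ) (_h : i + j ≤ k), ∀ t : Fin j, c' t = c ⟨i + t, by have := t.isLt; omega⟩

/-- The first `d` components of a vector. -/
def take {n : ℕ} (x : Fin n → ℝ) (d : ℕ) (h : d ≤ n) : Fin d → ℝ :=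
  fun i => x ⟨i, Nat.lt_of_lt_of_le i.isLt h⟩

/-- The components of a vector after the first `d` ones. -/
def drop {n : ℕ} (x : Fin n → ℝ) (d : ℕ) : Fin (n - d) → ℝ :=
  fun i => x ⟨d + i, by have := i.isLt; omega⟩

/-- The segment `(c_i, …, c_j)` of `c` (`0`-based indices). -/
def seg {k : ℕ} (c : Fin k → ℝ) (i j : ℕ) (hij : i ≤ j) (hj : j < k) :
    Fin (j - i + 1) → ℝ :=
  fun t => c ⟨i + t, by have := t.isLt; omega⟩

/-- `(c_i, …, c_j)` is a block of the decomposition `[c]_α` of the (positive,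
non-increasingly ordered) vector `c` according to `α`: ratios within the block
exceed `α`, and the ratios at the two boundaries of the block are `≤ α`
(or the block touches an end of `c`). -/
def IsBlock {k : ℕ} (α : ℝ) (c : Fin k → ℝ) (i j : ℕ) : Prop :=
  ∃ (hij : i ≤ j) (hj : j < k),
    (i = 0 ∨ c ⟨i, by omega⟩ / c ⟨i - 1, by omega⟩ ≤ α) ∧
    (j = k - 1 ∨ ∃ hj1 : j + 1 < k, c ⟨j + 1, hj1⟩ / c ⟨j, hj⟩ ≤ α) ∧
    (∀ (t : ℕ) (ht1 : i ≤ t) (ht2 : t < j), α < c ⟨t + 1, by omega⟩ / c ⟨t, by omega⟩)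

/-- `T_k(y)` : states transformable to `y` with a `k`-dimensional catalyst. -/
def Tk {n : ℕ} (k : ℕ) (y : Fin n → ℝ) : Set (Fin n → ℝ) :=
  {x ∈ Vn n | ∃ c : Fin k → ℝ, (∀ i, 0 < c i) ∧ (∑ i, c i) = 1 ∧ Antitone c ∧
    Maj (tensor x c) (tensor y c)}

/-- `M_k(y)` : states `x` with `x^{⊗k} ≺ y^{⊗k}`. -/
def Mk {n : ℕ} (k : ℕ) (y : Fin n → ℝ) : Set (Fin n → ℝ) :=
  {x ∈ Vn n | Maj (tpow x k) (tpow y k)}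

/-- `T(y)` : states transformable to `y` with some catalyst. -/
def Tinf {n : ℕ} (y : Fin n → ℝ) : Set (Fin n → ℝ) :=
  {x ∈ Vn n | ∃ (k : ℕ) (c : Fin k → ℝ), 0 < k ∧ (∀ i, 0 < c i) ∧ (∑ i, c i) = 1 ∧
    Antitone c ∧ Maj (tensor x c) (tensor y c)}

/-- `M(y)` : states `x` with `x^{⊗k} ≺ y^{⊗k}` for some `k ≥ 1`. -/
def Minf {n : ℕ} (y : Fin n → ℝ) : Set (Fin n → ℝ) :=
  {x ∈ Vn n | ∃ k : ℕ, 1 ≤ k ∧ Maj (tpow x k) (tpow y k)}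

/-- `S^λ(y)` : states `x` with `x ≺ʷ λ y`. -/
def Slam {n : ℕ} (lam : ℝ) (y : Fin n → ℝ) : Set (Fin n → ℝ) :=
  {x ∈ Vn n | SupMaj x (fun i => lam * y i)}

/-- `T^λ(y,c)` : states `x` with `x ⊗ c ≺ʷ λ (y ⊗ c)`. -/
def Tlamc {n k : ℕ} (lam : ℝ) (y : Fin n → ℝ) (c : Fin k → ℝ) : Set (Fin n → ℝ) :=
  {x ∈ Vn n | SupMaj (tensor x c) (fun i => lam * tensor y c i)}

/-- `T_k^λ(y)`. -/
def Tklam {n : ℕ} (k : ℕ) (lam : ℝ) (y : Fin n → ℝ) : Set (Fin n → ℝ) :=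
  {x ∈ Vn n | ∃ c : Fin k → ℝ, (∀ i, 0 < c i) ∧ (∑ i, c i) = 1 ∧ Antitone c ∧
    SupMaj (tensor x c) (fun i => lam * tensor y c i)}

/-- `M_k^λ(y)`. -/
def Mklam {n : ℕ} (k : ℕ) (lam : ℝ) (y : Fin n → ℝ) : Set (Fin n → ℝ) :=
  {x ∈ Vn n | SupMaj (tpow x k) (fun i => lam ^ k * tpow y k i)}

/-- `T^λ(y)`. -/
def Tlaminf {n : ℕ} (lam : ℝ) (y : Fin n → ℝ) : Set (Fin n → ℝ) :=
  {x ∈ Vn n | ∃ (k : ℕ) (c : Fin k → ℝ), 0 < k ∧ (∀ i, 0 < c i) ∧ (∑ i, c i) = 1 ∧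
    Antitone c ∧ SupMaj (tensor x c) (fun i => lam * tensor y c i)}

/-- `M^λ(y)`. -/
def Mlaminf {n : ℕ} (lam : ℝ) (y : Fin n → ℝ) : Set (Fin n → ℝ) :=
  {x ∈ Vn n | ∃ k : ℕ, 1 ≤ k ∧ SupMaj (tpow x k) (fun i => lam ^ k * tpow y k i)}

/-- `K_d(y)` : concatenations `x = x' ⊕ x''` with `x' ◁ y'` and `x'' ◁ y''`,
where `y'` is the first-`d` part of `y` and `y''` the rest. -/
def Kd {n : ℕ} (y : Fin n → ℝ) (d : ℕ) (h : d ≤ n) : Set (Fin n → ℝ) :=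
  {x ∈ Vn n | SMaj (take x d h) (take y d h) ∧ SMaj (drop x d) (drop y d)}

/-- `y(d)` : first `d` components equal to `e_d(y)/d`, the last `n-d` equal to
`(1 - e_d(y))/(n-d)`. -/
def yvec {n : ℕ} (y : Fin n → ℝ) (d : ℕ) : Fin n → ℝ :=
  fun i => if (i : ℕ) < d then eSum y d / d else (1 - eSum y d) / (n - d)

/-- `K_d^λ(y)` : states `x ∈ S^λ(y)` with `E_l(x) = λ E_l(y)` iff `l = n - d`. -/
def Kdlam {n : ℕ} (lam : ℝ) (y : Fin n → ℝ) (d : ℕ) : Set (Fin n → ℝ) :=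
  {x ∈ Vn n | SupMaj x (fun i => lam * y i) ∧
    ∀ l : ℕ, 1 ≤ l → l ≤ n → (ESum x l = lam * ESum y l ↔ l = n - d)}

namespace S17

open Finset

variable {N : ℕ}

lemma eSum_set_eq (x : Fin N → ℝ) (l : ℕ) :
    {r : ℝ | ∃ s : Finset (Fin N), s.card = l ∧ r = ∑ i ∈ s, x i} =
      ↑(((Finset.univ : Finset (Fin N)).powersetCard l).image (fun s => ∑ i ∈ s, x i)) := by
  ext r
  simp only [Set.mem_setOf_eq, coe_image, Set.mem_image, mem_coe, mem_powersetCard]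
  constructor
  · rintro ⟨s, hc, rfl⟩; exact ⟨s, ⟨s.subset_univ, hc⟩, rfl⟩
  · rintro ⟨s, ⟨-, hc⟩, rfl⟩; exact ⟨s, hc, rfl⟩

lemma sum_le_eSum (x : Fin N → ℝ) {s : Finset (Fin N)} {l : ℕ} (h : s.card = l) :
    ∑ i ∈ s, x i ≤ eSum x l := by
  apply le_csSup
  · rw [eSum_set_eq]
    exact Finset.bddAbove _
  · exact ⟨s, h, rfl⟩

lemma eSum_mem (x : Fin N → ℝ) {l : ℕ} (h : l ≤ N) :
    ∃ s : Finset (Fin N), s.card = l ∧ eSum x l = ∑ i ∈ s, x i := by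
  have hne : ({r : ℝ | ∃ s : Finset (Fin N), s.card = l ∧ r = ∑ i ∈ s, x i}).Nonempty := by
    obtain ⟨s, -, hs⟩ := Finset.exists_subset_card_eq
      (show l ≤ (Finset.univ : Finset (Fin N)).card by simpa using h)
    exact ⟨∑ i ∈ s, x i, s, hs, rfl⟩
  have hfin : ({r : ℝ | ∃ s : Finset (Fin N), s.card = l ∧ r = ∑ i ∈ s, x i}).Finite := by
    rw [eSum_set_eq]; exact (Finset.finite_toSet _)
  exact hne.csSup_mem hfin

lemma strictMono_le_apply {l : ℕ} {f : Fin l → Fin N} (hf : StrictMono f) (t : Fin l) :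
    (t : ℕ) ≤ (f t : ℕ) := by
  have H : ∀ m : ℕ, ∀ t : Fin l, (t : ℕ) = m → m ≤ (f t : ℕ) := by
    intro m
    induction m with
    | zero => intro t _; omega
    | succ m ih =>
      intro t ht
      have hm : m < l := by omega
      have h1 := ih ⟨m, hm⟩ rfl
      have h2 : f ⟨m, hm⟩ < f t := hf (by simp [Fin.lt_def]; omega)
      rw [Fin.lt_def] at h2; omega
  exact H _ t rfl

lemma filter_lt_eq_map {l : ℕ} (h : l ≤ N) :
    (Finset.univ : Finset (Fin N)).filter (fun i : Fin N => (i : ℕ) < l) =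
      Finset.map (Fin.castLEEmb h) Finset.univ := by
  ext i
  constructor
  · intro hi
    rw [mem_filter] at hi
    rw [Finset.mem_map]
    refine ⟨⟨i.1, hi.2⟩, Finset.mem_univ _, ?_⟩
    apply Fin.ext
    simp [Fin.castLEEmb]
  · intro hi
    obtain ⟨a, -, rfl⟩ := Finset.mem_map.1 hi
    rw [mem_filter]
    refine ⟨Finset.mem_univ _, ?_⟩
    simpa [Fin.castLEEmb] using a.2

lemma filter_lt_card {l : ℕ} (h : l ≤ N) :
    (((Finset.univ : Finset (Fin N))).filter (fun i : Fin N => (i : ℕ) < l)).card = l := by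
  rw [filter_lt_eq_map h]; simp

lemma sum_filter_lt (x : Fin N → ℝ) {l : ℕ} (h : l ≤ N) :
    ∑ i ∈ (Finset.univ : Finset (Fin N)).filter (fun i : Fin N => (i : ℕ) < l), x i =
      ∑ t : Fin l, x (Fin.castLE h t) := by
  rw [filter_lt_eq_map h, Finset.sum_map]
  rfl

lemma eSum_sorted {x : Fin N → ℝ} (hx : Antitone x) {l : ℕ} (h : l ≤ N) :
    eSum x l = ∑ i ∈ (Finset.univ : Finset (Fin N)).filter (fun i : Fin N => (i : ℕ) < l), x i := by
  refine le_antisymm ?_ (sum_le_eSum x (filter_lt_card h))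
  obtain ⟨s, hcard, hs⟩ := eSum_mem x h
  rw [hs, sum_filter_lt x h]
  set g := s.orderIsoOfFin hcard with hg
  have hmono : StrictMono (fun t : Fin l => ((g t : Fin N))) := by
    intro a b hab
    exact Subtype.coe_lt_coe.2 (g.strictMono hab)
  have e1 : ∑ i ∈ s, x i = ∑ t : Fin l, x (g t) := by
    rw [← Finset.sum_coe_sort s x,
      ← Equiv.sum_comp g.toEquiv (fun i : {a // a ∈ s} => (x i : ℝ))]
    simp
  rw [e1]
  apply Finset.sum_le_sum
  intro t _
  apply hx
  have := strictMono_le_apply hmono t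
  rw [Fin.le_def]
  simpa using this

lemma eSum_comp_perm (x : Fin N → ℝ) (τ : Equiv.Perm (Fin N)) (l : ℕ) :
    eSum (x ∘ ⇑τ) l = eSum x l := by
  unfold eSum
  congr 1
  ext r
  simp only [Set.mem_setOf_eq]
  constructor
  · rintro ⟨s, hc, rfl⟩
    refine ⟨s.image τ, ?_, ?_⟩
    · rw [Finset.card_image_of_injective _ τ.injective]; exact hc
    · rw [Finset.sum_image (fun a _ b _ hab => τ.injective hab)]
      rfl
  · rintro ⟨s, hc, rfl⟩
    refine ⟨s.image τ.symm, ?_, ?_⟩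
    · rw [Finset.card_image_of_injective _ τ.symm.injective]; exact hc
    · rw [Finset.sum_image (fun a _ b _ hab => τ.symm.injective hab)]
      apply Finset.sum_congr rfl
      intro i _
      simp

lemma eSum_topset {x : Fin N → ℝ} {S : Finset (Fin N)}
    (h : ∀ a ∈ S, ∀ b, b ∉ S → x b ≤ x a) :
    eSum x S.card = ∑ i ∈ S, x i := by
  refine le_antisymm ?_ (sum_le_eSum x rfl)
  have hSN : S.card ≤ N := by simpa using S.card_le_univ
  obtain ⟨T, hc, hT⟩ := eSum_mem x hSN
  rw [hT]
  have hcard : (T \ S).card = (S \ T).card := by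
    have h1 := Finset.card_sdiff_add_card_inter T S
    have h2 := Finset.card_sdiff_add_card_inter S T
    rw [Finset.inter_comm] at h2
    omega
  have key : ∑ i ∈ T \ S, x i ≤ ∑ i ∈ S \ T, x i := by
    let e := Finset.equivOfCardEq hcard
    calc ∑ i ∈ T \ S, x i = ∑ i : {a // a ∈ T \ S}, x i := (Finset.sum_coe_sort _ x).symm
      _ ≤ ∑ i : {a // a ∈ T \ S}, x (e i) := by
          apply Finset.sum_le_sum
          intro i _
          have hi : (i : Fin N) ∉ S := (Finset.mem_sdiff.1 i.2).2
          have he : ((e i : Fin N)) ∈ S := (Finset.mem_sdiff.1 (e i).2).1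
          exact h _ he _ hi
      _ = ∑ i : {a // a ∈ S \ T}, x i := Equiv.sum_comp e (fun i : {a // a ∈ S \ T} => x i)
      _ = ∑ i ∈ S \ T, x i := Finset.sum_coe_sort _ x
  have hTsplit : ∑ i ∈ T, x i = ∑ i ∈ T ∩ S, x i + ∑ i ∈ T \ S, x i :=
    (Finset.sum_inter_add_sum_sdiff T S x).symm
  have hSsplit : ∑ i ∈ S, x i = ∑ i ∈ T ∩ S, x i + ∑ i ∈ S \ T, x i := by
    rw [Finset.inter_comm]
    exact (Finset.sum_inter_add_sum_sdiff S T x).symm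
  linarith

lemma eSum_zero (x : Fin N → ℝ) : eSum x 0 = 0 := by
  obtain ⟨s, hc, hs⟩ := eSum_mem x (Nat.zero_le N)
  rw [hs, Finset.card_eq_zero.1 hc, Finset.sum_empty]

lemma eSum_succ {x : Fin N → ℝ} (hx : Antitone x) {m : ℕ} (h : m + 1 ≤ N) :
    eSum x (m + 1) = eSum x m + x ⟨m, h⟩ := by
  rw [eSum_sorted hx h, eSum_sorted hx (le_trans (Nat.le_succ m) h)]
  have hins : (Finset.univ : Finset (Fin N)).filter (fun i : Fin N => (i : ℕ) < m + 1) =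
      insert (⟨m, h⟩ : Fin N)
        ((Finset.univ : Finset (Fin N)).filter (fun i : Fin N => (i : ℕ) < m)) := by
    ext i
    simp only [mem_filter, mem_univ, true_and, Finset.mem_insert]
    constructor
    · intro hi
      rcases Nat.lt_succ_iff_lt_or_eq.1 hi with h' | h'
      · exact Or.inr h'
      · exact Or.inl (Fin.ext h')
    · rintro (rfl | hi)
      · simp
      · omega
  rw [hins, Finset.sum_insert (by simp)]
  ring

/-- the φ function -/
def Phi {N : ℕ} (v : Fin N → ℝ) (t : ℝ) : ℝ := ∑ i, max (v i - t) 0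

lemma Phi_nonneg (v : Fin N → ℝ) (t : ℝ) : 0 ≤ Phi v t :=
  Finset.sum_nonneg fun _ _ => le_max_right _ _

lemma eSum_le_Phi (v : Fin N → ℝ) {l : ℕ} (h : l ≤ N) (t : ℝ) :
    eSum v l ≤ l * t + Phi v t := by
  obtain ⟨s, hc, hs⟩ := eSum_mem v h
  rw [hs]
  calc ∑ i ∈ s, v i ≤ ∑ i ∈ s, (t + max (v i - t) 0) := by
        apply Finset.sum_le_sum
        intro i _
        have := le_max_left (v i - t) 0
        linarith
    _ = s.card * t + ∑ i ∈ s, max (v i - t) 0 := by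
        rw [Finset.sum_add_distrib, Finset.sum_const, nsmul_eq_mul]
    _ ≤ s.card * t + Phi v t := by
        have : ∑ i ∈ s, max (v i - t) 0 ≤ Phi v t :=
          Finset.sum_le_sum_of_subset_of_nonneg s.subset_univ (fun i _ _ => le_max_right _ _)
        linarith
    _ = l * t + Phi v t := by rw [hc]

lemma le_Phi (v : Fin N → ℝ) {m : ℕ} (h : m ≤ N) (t : ℝ) :
    eSum v m - m * t ≤ Phi v t := by
  obtain ⟨s, hc, hs⟩ := eSum_mem v h
  rw [hs]
  calc ∑ i ∈ s, v i - m * t = ∑ i ∈ s, (v i - t) := by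
        rw [Finset.sum_sub_distrib, Finset.sum_const, hc, nsmul_eq_mul]
    _ ≤ ∑ i ∈ s, max (v i - t) 0 := Finset.sum_le_sum (fun i _ => le_max_left _ _)
    _ ≤ Phi v t :=
        Finset.sum_le_sum_of_subset_of_nonneg s.subset_univ (fun i _ _ => le_max_right _ _)

lemma Phi_filter (v : Fin N → ℝ) (t : ℝ) :
    Phi v t = ∑ i ∈ (Finset.univ : Finset (Fin N)).filter (fun i : Fin N => t < v i),
      (v i - t) := by
  unfold Phi
  rw [← Finset.sum_filter_add_sum_filter_not Finset.univ (fun i : Fin N => t < v i)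
    (fun i => max (v i - t) 0)]
  have h2 : ∑ i ∈ Finset.univ.filter (fun i : Fin N => ¬ t < v i), max (v i - t) 0 = 0 := by
    apply Finset.sum_eq_zero
    intro i hi
    rw [mem_filter] at hi
    have hle : v i ≤ t := not_lt.1 hi.2
    exact max_eq_right (by linarith)
  rw [h2, add_zero]
  apply Finset.sum_congr rfl
  intro i hi
  rw [mem_filter] at hi
  exact max_eq_left (by linarith [hi.2])

lemma lowerset_eq_filter {S : Finset (Fin N)} (h : ∀ i j : Fin N, j ≤ i → i ∈ S → j ∈ S) :
    S = (Finset.univ : Finset (Fin N)).filter (fun i : Fin N => (i : ℕ) < S.card) := by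
  ext i
  simp only [mem_filter, mem_univ, true_and]
  constructor
  · intro hi
    have hsub : Finset.Iic i ⊆ S := fun j hj => h i j (Finset.mem_Iic.1 hj) hi
    have hc := Finset.card_le_card hsub
    rw [Fin.card_Iic] at hc
    omega
  · intro hi
    by_contra hns
    have hsub : S ⊆ Finset.Iio i := by
      intro j hj
      rw [Finset.mem_Iio]
      rcases lt_or_ge j i with h' | h'
      · exact h'
      · exact absurd (h j i h' hj) hns
    have hc := Finset.card_le_card hsub
    rw [Fin.card_Iio] at hc
    omega

lemma Phi_sorted {x : Fin N → ℝ} (hx : Antitone x) (t : ℝ) :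
    Phi x t =
      eSum x (((Finset.univ : Finset (Fin N)).filter (fun i : Fin N => t < x i)).card)
      - (((Finset.univ : Finset (Fin N)).filter (fun i : Fin N => t < x i)).card : ℝ) * t := by
  set S := (Finset.univ : Finset (Fin N)).filter (fun i : Fin N => t < x i) with hS
  have hls : ∀ i j : Fin N, j ≤ i → i ∈ S → j ∈ S := by
    intro i j hji hi
    rw [hS, mem_filter] at hi ⊢
    exact ⟨mem_univ _, lt_of_lt_of_le hi.2 (hx hji)⟩
  have hcard : S.card ≤ N := by simpa using S.card_le_univ
  rw [Phi_filter, eSum_sorted hx hcard, ← lowerset_eq_filter hls, Finset.sum_sub_distrib,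
    Finset.sum_const, nsmul_eq_mul]

lemma exists_theta (v : Fin N → ℝ) {l : ℕ} (hl : l + 1 ≤ N) :
    ∃ t : ℝ, eSum v l = l * t + Phi v t := by
  set σ := Tuple.sort v with hσ
  set τ : Equiv.Perm (Fin N) := Fin.revPerm.trans σ with hτ
  set w : Fin N → ℝ := v ∘ ⇑τ with hw
  have hτa : ∀ i : Fin N, τ i = σ i.rev := by intro i; simp [hτ]
  have hwanti : Antitone w := by
    intro i j hij
    show v (τ j) ≤ v (τ i)
    rw [hτa, hτa]
    exact Tuple.monotone_sort v (Fin.rev_le_rev.2 hij)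
  have hlN : l ≤ N := by omega
  have hlt : l < N := hl
  set θ := w ⟨l, hlt⟩ with hθ
  refine ⟨θ, ?_⟩
  rw [← eSum_comp_perm v τ l, ← hw, eSum_sorted hwanti hlN]
  have hPhi : Phi v θ = Phi w θ := by
    unfold Phi
    exact (Equiv.sum_comp τ (fun i => max (v i - θ) 0)).symm
  rw [hPhi, Phi_filter w θ]
  have hsub : (Finset.univ : Finset (Fin N)).filter (fun i : Fin N => θ < w i) ⊆
      (Finset.univ : Finset (Fin N)).filter (fun i : Fin N => (i : ℕ) < l) := by
    intro i hi
    rw [mem_filter] at hi ⊢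
    refine ⟨mem_univ _, ?_⟩
    by_contra hge
    have hle : w i ≤ θ := hwanti (show (⟨l, hlt⟩ : Fin N) ≤ i by rw [Fin.le_def]; simp; omega)
    linarith [hi.2]
  have hzero : ∀ i ∈ (Finset.univ : Finset (Fin N)).filter (fun i : Fin N => (i : ℕ) < l),
      i ∉ (Finset.univ : Finset (Fin N)).filter (fun i : Fin N => θ < w i) → w i - θ = 0 := by
    intro i hi hni
    rw [mem_filter] at hi
    have h1 : θ ≤ w i := hwanti (show i ≤ (⟨l, hlt⟩ : Fin N) by rw [Fin.le_def]; simp; omega)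
    have h2 : ¬ θ < w i := by
      intro hcon
      exact hni (by rw [mem_filter]; exact ⟨mem_univ _, hcon⟩)
    linarith [not_lt.1 h2]
  rw [Finset.sum_subset hsub hzero, Finset.sum_sub_distrib, Finset.sum_const,
    filter_lt_card hlN, nsmul_eq_mul]
  ring

lemma bracket {v : Fin N → ℝ} {l : ℕ} {t : ℝ} (hl1 : 1 ≤ l) (hl2 : l + 1 ≤ N)
    (heq : eSum v l = l * t + Phi v t) :
    (∃ i, v i ≤ t) ∧ (∃ i, t ≤ v i) := by
  obtain ⟨T, hc, hT⟩ := eSum_mem v (show l ≤ N by omega)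
  have hTsum : ∑ i ∈ T, v i = l * t + ∑ i ∈ T, (v i - t) := by
    rw [Finset.sum_sub_distrib, Finset.sum_const, hc, nsmul_eq_mul]
    ring
  have h2 : ∑ i ∈ T, (v i - t) ≤ ∑ i ∈ T, max (v i - t) 0 :=
    Finset.sum_le_sum (fun i _ => le_max_left _ _)
  have h3 : ∑ i ∈ T, max (v i - t) 0 ≤ Phi v t :=
    Finset.sum_le_sum_of_subset_of_nonneg T.subset_univ (fun i _ _ => le_max_right _ _)
  have ha : ∑ i ∈ T, (v i - t) = Phi v t := by
    rw [hT] at heq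
    linarith [hTsum, heq]
  have hb : ∑ i ∈ T, (v i - t) = ∑ i ∈ T, max (v i - t) 0 := le_antisymm h2 (by linarith)
  have hcmax : ∑ i ∈ T, max (v i - t) 0 = Phi v t := by linarith
  constructor
  · have hTne : T ≠ Finset.univ := by
      intro h
      rw [h] at hc
      simp at hc
      omega
    obtain ⟨i, hi⟩ : ∃ i, i ∉ T := by
      by_contra hcon
      push_neg at hcon
      exact hTne (Finset.eq_univ_iff_forall.2 hcon)
    have hsplit : Phi v t = ∑ j ∈ T, max (v j - t) 0 +
        ∑ j ∈ Finset.univ \ T, max (v j - t) 0 := by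
      unfold Phi
      rw [← Finset.sum_sdiff T.subset_univ]
      ring
    have hz : ∑ j ∈ Finset.univ \ T, max (v j - t) 0 = 0 := by linarith
    have hmax0 : max (v i - t) 0 = 0 :=
      (Finset.sum_eq_zero_iff_of_nonneg (fun j _ => le_max_right _ _)).1 hz i
        (by rw [Finset.mem_sdiff]; exact ⟨mem_univ _, hi⟩)
    refine ⟨i, ?_⟩
    have := le_max_left (v i - t) 0
    rw [hmax0] at this
    linarith
  · have hTne : T.Nonempty := Finset.card_pos.1 (by omega)
    obtain ⟨i, hi⟩ := hTne
    have heqi := (Finset.sum_eq_sum_iff_of_le (fun j _ => le_max_left (v j - t) 0)).1 hb i hi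
    refine ⟨i, ?_⟩
    have h0 := le_max_right (v i - t) 0
    rw [← heqi] at h0
    linarith
section TP

variable {n : ℕ}

lemma tpow_ffe (x : Fin n → ℝ) (K : ℕ) (g : Fin K → Fin n) :
    tpow x K (finFunctionFinEquiv g) = ∏ j, x (g j) := by
  unfold tpow
  simp

def eqvP (n K : ℕ) : Fin n × Fin (n ^ K) ≃ Fin (n ^ (K + 1)) :=
  ((Equiv.prodCongr (Equiv.refl (Fin n)) finFunctionFinEquiv.symm).trans
    ((Fin.consEquiv (fun _ : Fin (K + 1) => Fin n)).trans finFunctionFinEquiv))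

lemma tpow_eqvP (x : Fin n → ℝ) (K : ℕ) (p : Fin n × Fin (n ^ K)) :
    tpow x (K + 1) (eqvP n K p) = x p.1 * tpow x K p.2 := by
  obtain ⟨i, m⟩ := p
  have h1 : eqvP n K (i, m) =
      finFunctionFinEquiv (Fin.cons i (fun j => finFunctionFinEquiv.symm m j)) := rfl
  rw [h1, tpow_ffe, Fin.prod_univ_succ]
  simp only [Fin.cons_zero, Fin.cons_succ]
  rfl

lemma posmax (c t θ : ℝ) (hc : 0 < c) : c * max (t - θ / c) 0 = max (c * t - θ) 0 := by
  rw [mul_max_of_nonneg _ _ hc.le]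
  congr 1
  · field_simp
  · exact mul_zero c

lemma Phi_tpow_double (x : Fin n → ℝ) (K : ℕ) (θ : ℝ) :
    Phi (tpow x (K + 1)) θ =
      ∑ i : Fin n, ∑ m : Fin (n ^ K), max (x i * tpow x K m - θ) 0 := by
  unfold Phi
  rw [← Equiv.sum_comp (eqvP n K) (fun q => max (tpow x (K + 1) q - θ) 0)]
  rw [Fintype.sum_prod_type]
  refine Finset.sum_congr rfl (fun i _ => Finset.sum_congr rfl (fun m _ => ?_))
  rw [tpow_eqvP]

lemma sum_max_factor {M : ℕ} (v : Fin M → ℝ) (c θ : ℝ) (hc : 0 < c) :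
    ∑ m : Fin M, max (c * v m - θ) 0 = c * Phi v (θ / c) := by
  unfold Phi
  rw [Finset.mul_sum]
  exact Finset.sum_congr rfl (fun m _ => (posmax c (v m) θ hc).symm)

/-- difference of φ's at the base level -/
def Ed (x y : Fin n → ℝ) (t : ℝ) : ℝ := Phi y t - Phi x t

/-- difference of φ's for the k-th tensor powers -/
def Dlt (x y : Fin n → ℝ) (K : ℕ) (θ : ℝ) : ℝ := Phi (tpow y K) θ - Phi (tpow x K) θ

variable {x y : Fin n → ℝ}

lemma tpow_pos (hx : ∀ i, 0 < x i) (K : ℕ) (m : Fin (n ^ K)) : 0 < tpow x K m :=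
  Finset.prod_pos (fun j _ => hx _)

lemma Dlt_rec (hx : ∀ i, 0 < x i) (hy : ∀ i, 0 < y i) (K : ℕ) (θ : ℝ) :
    Dlt x y (K + 1) θ = (∑ i : Fin n, y i * Dlt x y K (θ / y i))
      + ∑ m : Fin (n ^ K), tpow x K m * Ed x y (θ / tpow x K m) := by
  have hxp := tpow_pos hx (K := K)
  unfold Dlt Ed
  rw [Phi_tpow_double x K θ, Phi_tpow_double y K θ]
  have e1 : ∑ i : Fin n, ∑ m : Fin (n ^ K), max (y i * tpow y K m - θ) 0
      = ∑ i : Fin n, y i * Phi (tpow y K) (θ / y i) :=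
    Finset.sum_congr rfl (fun i _ => sum_max_factor _ _ _ (hy i))
  have e2 : ∑ i : Fin n, ∑ m : Fin (n ^ K), max (y i * tpow x K m - θ) 0
      = ∑ i : Fin n, y i * Phi (tpow x K) (θ / y i) :=
    Finset.sum_congr rfl (fun i _ => sum_max_factor _ _ _ (hy i))
  have e3 : ∑ i : Fin n, ∑ m : Fin (n ^ K), max (y i * tpow x K m - θ) 0
      = ∑ m : Fin (n ^ K), tpow x K m * Phi y (θ / tpow x K m) := by
    rw [Finset.sum_comm]
    refine Finset.sum_congr rfl (fun m _ => ?_)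
    rw [← sum_max_factor y (tpow x K m) θ (hxp m)]
    exact Finset.sum_congr rfl (fun i _ => by rw [mul_comm (y i)])
  have e4 : ∑ i : Fin n, ∑ m : Fin (n ^ K), max (x i * tpow x K m - θ) 0
      = ∑ m : Fin (n ^ K), tpow x K m * Phi x (θ / tpow x K m) := by
    rw [Finset.sum_comm]
    refine Finset.sum_congr rfl (fun m _ => ?_)
    rw [← sum_max_factor x (tpow x K m) θ (hxp m)]
    exact Finset.sum_congr rfl (fun i _ => by rw [mul_comm (x i)])
  have split1 : ∑ i : Fin n, y i * (Phi (tpow y K) (θ / y i) - Phi (tpow x K) (θ / y i))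
      = (∑ i : Fin n, y i * Phi (tpow y K) (θ / y i))
        - ∑ i : Fin n, y i * Phi (tpow x K) (θ / y i) := by
    rw [← Finset.sum_sub_distrib]
    exact Finset.sum_congr rfl (fun i _ => by ring)
  have split2 : ∑ m : Fin (n ^ K), tpow x K m *
        (Phi y (θ / tpow x K m) - Phi x (θ / tpow x K m))
      = (∑ m : Fin (n ^ K), tpow x K m * Phi y (θ / tpow x K m))
        - ∑ m : Fin (n ^ K), tpow x K m * Phi x (θ / tpow x K m) := by
    rw [← Finset.sum_sub_distrib]
    exact Finset.sum_congr rfl (fun m _ => by ring)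
  rw [split1, split2, ← e1, ← e2, ← e3, ← e4]
  ring

lemma Ed_nonneg (hM : ∀ m : ℕ, m ≤ n → eSum x m ≤ eSum y m) (t : ℝ) :
    0 ≤ Ed x y t := by
  unfold Ed
  set S := (Finset.univ : Finset (Fin n)).filter (fun i : Fin n => t < x i) with hS
  have hc : S.card ≤ n := by simpa using S.card_le_univ
  have h1 : Phi x t = ∑ i ∈ S, (x i - t) := Phi_filter x t
  have h2 : ∑ i ∈ S, (x i - t) = ∑ i ∈ S, x i - S.card * t := by
    rw [Finset.sum_sub_distrib, Finset.sum_const, nsmul_eq_mul]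
  have h3 : ∑ i ∈ S, x i ≤ eSum x S.card := sum_le_eSum x rfl
  have h4 := hM S.card hc
  have h5 := le_Phi y hc t
  rw [h1, h2]
  linarith

lemma Dlt_zero (θ : ℝ) : Dlt x y 0 θ = 0 := by
  unfold Dlt
  have h1 : ∀ v : Fin n → ℝ, tpow v 0 = fun _ => (1 : ℝ) := by
    intro v
    funext m
    unfold tpow
    simp
  rw [h1 x, h1 y]
  ring

lemma Dlt_nonneg (hx : ∀ i, 0 < x i) (hy : ∀ i, 0 < y i)
    (hM : ∀ m : ℕ, m ≤ n → eSum x m ≤ eSum y m) (K : ℕ) (θ : ℝ) :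
    0 ≤ Dlt x y K θ := by
  induction K generalizing θ with
  | zero => rw [Dlt_zero]
  | succ K ih =>
    rw [Dlt_rec hx hy]
    apply add_nonneg
    · exact Finset.sum_nonneg fun i _ => mul_nonneg (hy i).le (ih _)
    · exact Finset.sum_nonneg fun m _ =>
        mul_nonneg (tpow_pos hx K m).le (Ed_nonneg hM _)

lemma Dlt_peel (hx : ∀ i, 0 < x i) (hy : ∀ i, 0 < y i)
    (hM : ∀ m : ℕ, m ≤ n → eSum x m ≤ eSum y m) (i : Fin n) (K : ℕ) (θ : ℝ) :
    y i * Dlt x y K (θ / y i) ≤ Dlt x y (K + 1) θ := by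
  rw [Dlt_rec hx hy]
  have h1 : y i * Dlt x y K (θ / y i) ≤ ∑ i' : Fin n, y i' * Dlt x y K (θ / y i') :=
    Finset.single_le_sum (f := fun i' => y i' * Dlt x y K (θ / y i'))
      (fun j _ => mul_nonneg (hy j).le (Dlt_nonneg hx hy hM K _)) (Finset.mem_univ i)
  have h2 : 0 ≤ ∑ m : Fin (n ^ K), tpow x K m * Ed x y (θ / tpow x K m) :=
    Finset.sum_nonneg fun m _ => mul_nonneg (tpow_pos hx K m).le (Ed_nonneg hM _)
  linarith

lemma Dlt_Eterm (hx : ∀ i, 0 < x i) (hy : ∀ i, 0 < y i)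
    (hM : ∀ m : ℕ, m ≤ n → eSum x m ≤ eSum y m) (K : ℕ) (g : Fin K → Fin n) (θ : ℝ) :
    (∏ j, x (g j)) * Ed x y (θ / ∏ j, x (g j)) ≤ Dlt x y (K + 1) θ := by
  rw [Dlt_rec hx hy]
  have hterm := Finset.single_le_sum
    (f := fun m : Fin (n ^ K) => tpow x K m * Ed x y (θ / tpow x K m))
    (fun m _ => mul_nonneg (tpow_pos hx K m).le (Ed_nonneg hM _))
    (Finset.mem_univ (finFunctionFinEquiv g))
  rw [tpow_ffe] at hterm
  have h1 : 0 ≤ ∑ i : Fin n, y i * Dlt x y K (θ / y i) :=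
    Finset.sum_nonneg fun i _ => mul_nonneg (hy i).le (Dlt_nonneg hx hy hM K _)
  linarith

lemma Dlt_peelPow (hx : ∀ i, 0 < x i) (hy : ∀ i, 0 < y i)
    (hM : ∀ m : ℕ, m ≤ n → eSum x m ≤ eSum y m) (i : Fin n) (P : ℕ) :
    ∀ (K : ℕ) (θ : ℝ), (y i) ^ P * Dlt x y K (θ / (y i) ^ P) ≤ Dlt x y (P + K) θ := by
  induction P with
  | zero => intro K θ; simp
  | succ P ih =>
    intro K θ
    rw [show P + 1 + K = (P + K) + 1 by omega]
    have h2 := Dlt_peel hx hy hM i (P + K) θ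
    have h3 := ih K (θ / y i)
    have h4 : θ / y i / (y i) ^ P = θ / (y i) ^ (P + 1) := by
      rw [div_div, ← pow_succ']
    calc (y i) ^ (P + 1) * Dlt x y K (θ / (y i) ^ (P + 1))
        = y i * ((y i) ^ P * Dlt x y K (θ / y i / (y i) ^ P)) := by rw [h4]; ring
      _ ≤ y i * Dlt x y (P + K) (θ / y i) := by
          apply mul_le_mul_of_nonneg_left h3 (hy i).le
      _ ≤ Dlt x y (P + K + 1) θ := h2

end TP
section EPOS

variable {n : ℕ}

lemma claimA {y : Fin n → ℝ} (hya : Antitone y) {t : ℝ} {a b : ℕ} (hab : a < b) (hbn : b ≤ n)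
    (hy' : ∀ i : Fin n, (i : ℕ) < b → t < y i) :
    eSum y a - a * t < eSum y b - b * t := by
  have han : a ≤ n := by omega
  set Fa := (Finset.univ : Finset (Fin n)).filter (fun i : Fin n => (i : ℕ) < a) with hFa
  set Fb := (Finset.univ : Finset (Fin n)).filter (fun i : Fin n => (i : ℕ) < b) with hFb
  have hsub : Fa ⊆ Fb := by
    intro i hi
    rw [hFa, mem_filter] at hi
    rw [hFb, mem_filter]
    exact ⟨mem_univ _, by omega⟩
  have hsum := Finset.sum_sdiff (f := y) hsub
  have hcard : (Fb \ Fa).card = b - a := by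
    rw [Finset.card_sdiff_of_subset hsub, hFa, hFb, filter_lt_card hbn, filter_lt_card han]
  have hpos : 0 < ∑ i ∈ Fb \ Fa, (y i - t) := by
    apply Finset.sum_pos
    · intro i hi
      have hib : i ∈ Fb := (Finset.mem_sdiff.1 hi).1
      rw [hFb, mem_filter] at hib
      have := hy' i hib.2
      linarith
    · rw [← Finset.card_pos, hcard]
      omega
  have hDy : ∑ i ∈ Fb \ Fa, y i = (∑ i ∈ Fb, y i) - ∑ i ∈ Fa, y i := by linarith [hsum]
  have hsplit : ∑ i ∈ Fb \ Fa, (y i - t) = (eSum y b - eSum y a) - ((b : ℝ) - a) * t := by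
    rw [Finset.sum_sub_distrib, Finset.sum_const, hcard, nsmul_eq_mul, hDy,
      eSum_sorted hya hbn, eSum_sorted hya han, Nat.cast_sub hab.le]
  rw [hsplit] at hpos
  linarith

lemma claimB {y : Fin n → ℝ} (hya : Antitone y) {t : ℝ} {a b : ℕ} (hab : a < b) (hbn : b ≤ n)
    (hy1 : ∀ i : Fin n, a ≤ (i : ℕ) → y i ≤ t) (i0 : Fin n) (hi0a : a ≤ (i0 : ℕ))
    (hi0b : (i0 : ℕ) < b) (hy2 : y i0 < t) :
    eSum y b - b * t < eSum y a - a * t := by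
  have han : a ≤ n := by omega
  set Fa := (Finset.univ : Finset (Fin n)).filter (fun i : Fin n => (i : ℕ) < a) with hFa
  set Fb := (Finset.univ : Finset (Fin n)).filter (fun i : Fin n => (i : ℕ) < b) with hFb
  have hsub : Fa ⊆ Fb := by
    intro i hi
    rw [hFa, mem_filter] at hi
    rw [hFb, mem_filter]
    exact ⟨mem_univ _, by omega⟩
  have hsum := Finset.sum_sdiff (f := y) hsub
  have hcard : (Fb \ Fa).card = b - a := by
    rw [Finset.card_sdiff_of_subset hsub, hFa, hFb, filter_lt_card hbn, filter_lt_card han]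
  have hneg : ∑ i ∈ Fb \ Fa, (y i - t) < 0 := by
    have h1 : ∑ i ∈ Fb \ Fa, (y i - t) < ∑ _i ∈ Fb \ Fa, (0 : ℝ) := by
      apply Finset.sum_lt_sum
      · intro i hi
        have hia : i ∉ Fa := (Finset.mem_sdiff.1 hi).2
        rw [hFa, mem_filter] at hia
        have hge : a ≤ (i : ℕ) := by
          by_contra hcon
          exact hia ⟨mem_univ _, by omega⟩
        have := hy1 i hge
        linarith
      · refine ⟨i0, ?_, by linarith⟩
        rw [Finset.mem_sdiff, hFa, hFb, mem_filter, mem_filter]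
        exact ⟨⟨mem_univ _, hi0b⟩, fun hc => by omega⟩
    simpa using h1
  have hDy : ∑ i ∈ Fb \ Fa, y i = (∑ i ∈ Fb, y i) - ∑ i ∈ Fa, y i := by linarith [hsum]
  have hsplit : ∑ i ∈ Fb \ Fa, (y i - t) = (eSum y b - eSum y a) - ((b : ℝ) - a) * t := by
    rw [Finset.sum_sub_distrib, Finset.sum_const, hcard, nsmul_eq_mul, hDy,
      eSum_sorted hya hbn, eSum_sorted hya han, Nat.cast_sub hab.le]
  rw [hsplit] at hneg
  linarith

lemma Ed_pos {x y : Fin n → ℝ} (hxa : Antitone x) (hya : Antitone y) {d : ℕ}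
    (hd1 : 1 ≤ d) (hdn : d + 1 ≤ n)
    (hM : ∀ m : ℕ, m ≤ n → eSum x m ≤ eSum y m)
    (hMeq : eSum x d = eSum y d) (hMeqn : eSum x n = eSum y n)
    (hMlt : ∀ m : ℕ, 1 ≤ m → m + 1 ≤ n → m ≠ d → eSum x m < eSum y m)
    {t : ℝ}
    (ht : (y ⟨d - 1, by omega⟩ < t ∧ t < y ⟨0, by omega⟩) ∨
          (y ⟨n - 1, by omega⟩ < t ∧ t < y ⟨d, by omega⟩)) :
    0 < Ed x y t := by
  unfold Ed
  set m2 := (((Finset.univ : Finset (Fin n))).filter (fun i : Fin n => t < x i)).card with hm2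
  have hm2n : m2 ≤ n := by
    rw [hm2]
    simpa using Finset.card_le_univ ((Finset.univ : Finset (Fin n)).filter (fun i : Fin n => t < x i))
  have hPhix : Phi x t = eSum x m2 - (m2 : ℝ) * t := Phi_sorted hxa t
  rw [hPhix]
  have hgoal : eSum x m2 - (m2 : ℝ) * t < Phi y t → 0 < Phi y t - (eSum x m2 - (m2 : ℝ) * t) := by
    intro h; linarith
  apply hgoal
  by_cases hcase : m2 ≠ 0 ∧ m2 ≠ d ∧ m2 ≠ n
  · have h1 : eSum x m2 < eSum y m2 := hMlt m2 (by omega) (by omega) hcase.2.1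
    have h2 := le_Phi y hm2n t
    linarith
  · have hm2or : m2 = 0 ∨ m2 = d ∨ m2 = n := by tauto
    have hxy : eSum x m2 = eSum y m2 := by
      rcases hm2or with h | h | h
      · rw [h, eSum_zero, eSum_zero]
      · rw [h]; exact hMeq
      · rw [h]; exact hMeqn
    rw [hxy]
    set m := (((Finset.univ : Finset (Fin n))).filter (fun i : Fin n => t < y i)).card with hm
    set mb := (((Finset.univ : Finset (Fin n))).filter (fun i : Fin n => t ≤ y i)).card with hmb
    have hPhiy : Phi y t = eSum y m - (m : ℝ) * t := Phi_sorted hya t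
    have hmn : m ≤ n := by
      rw [hm]
      simpa using Finset.card_le_univ ((Finset.univ : Finset (Fin n)).filter (fun i : Fin n => t < y i))
    have hmbn : mb ≤ n := by
      rw [hmb]
      simpa using Finset.card_le_univ ((Finset.univ : Finset (Fin n)).filter (fun i : Fin n => t ≤ y i))
    have hyls : ((Finset.univ : Finset (Fin n)).filter (fun i : Fin n => t < y i)) =
        (Finset.univ : Finset (Fin n)).filter (fun i : Fin n => (i : ℕ) < m) :=
      lowerset_eq_filter (fun i j hji hi => by
        rw [mem_filter] at hi ⊢
        exact ⟨mem_univ _, lt_of_lt_of_le hi.2 (hya hji)⟩)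
    have hyls2 : ((Finset.univ : Finset (Fin n)).filter (fun i : Fin n => t ≤ y i)) =
        (Finset.univ : Finset (Fin n)).filter (fun i : Fin n => (i : ℕ) < mb) :=
      lowerset_eq_filter (fun i j hji hi => by
        rw [mem_filter] at hi ⊢
        exact ⟨mem_univ _, le_trans hi.2 (hya hji)⟩)
    have hmlty : ∀ i : Fin n, (i : ℕ) < m → t < y i := by
      intro i hi
      have hmem : i ∈ (Finset.univ : Finset (Fin n)).filter (fun i : Fin n => (i : ℕ) < m) := by
        rw [mem_filter]; exact ⟨mem_univ _, hi⟩
      rw [← hyls, mem_filter] at hmem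
      exact hmem.2
    have hgey : ∀ i : Fin n, m ≤ (i : ℕ) → y i ≤ t := by
      intro i hi
      by_contra hcon
      have hmem : i ∈ (Finset.univ : Finset (Fin n)).filter (fun i : Fin n => t < y i) := by
        rw [mem_filter]; exact ⟨mem_univ _, not_le.1 hcon⟩
      rw [hyls, mem_filter] at hmem
      omega
    have hlt_mb : ∀ i : Fin n, mb ≤ (i : ℕ) → y i < t := by
      intro i hi
      by_contra hcon
      have hmem : i ∈ (Finset.univ : Finset (Fin n)).filter (fun i : Fin n => t ≤ y i) := by
        rw [mem_filter]; exact ⟨mem_univ _, not_lt.1 hcon⟩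
      rw [hyls2, mem_filter] at hmem
      omega
    have hm_le_mb : m ≤ mb := by
      apply Finset.card_le_card
      intro i hi
      rw [mem_filter] at hi ⊢
      exact ⟨mem_univ _, hi.2.le⟩
    rw [hPhiy]
    rcases ht with ⟨ht1, ht2⟩ | ⟨ht1, ht2⟩
    · -- upper interval (y_{d-1}, y_0)
      have hm1 : 1 ≤ m := by
        have h0 : (⟨0, by omega⟩ : Fin n) ∈
            (Finset.univ : Finset (Fin n)).filter (fun i : Fin n => t < y i) := by
          rw [mem_filter]; exact ⟨mem_univ _, ht2⟩
        have := Finset.card_pos.2 ⟨_, h0⟩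
        omega
      have hmbd : mb ≤ d - 1 := by
        have hsub : ((Finset.univ : Finset (Fin n)).filter (fun i : Fin n => t ≤ y i)) ⊆
            (Finset.univ : Finset (Fin n)).filter (fun i : Fin n => (i : ℕ) < d - 1) := by
          intro i hi
          rw [mem_filter] at hi ⊢
          refine ⟨mem_univ _, ?_⟩
          by_contra hge
          have hle : y i ≤ y ⟨d - 1, by omega⟩ := hya (by rw [Fin.le_def]; simp; omega)
          linarith [hi.2]
        have := Finset.card_le_card hsub
        rwa [filter_lt_card (show d - 1 ≤ n by omega)] at this
      rcases hm2or with h | h | h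
      · exact claimA hya (show m2 < m by omega) hmn hmlty
      · refine claimB hya (show m < m2 by omega) (by omega) hgey
          ⟨mb, by omega⟩ (by simp <;> omega) (by simp <;> omega) (hlt_mb _ (by simp))
      · refine claimB hya (show m < m2 by omega) (by omega) hgey
          ⟨mb, by omega⟩ (by simp <;> omega) (by simp <;> omega) (hlt_mb _ (by simp))
    · -- lower interval (y_{n-1}, y_d)
      have hmd1 : d + 1 ≤ m := by
        have hsub : ((Finset.univ : Finset (Fin n)).filter (fun i : Fin n => (i : ℕ) < d + 1)) ⊆
            (Finset.univ : Finset (Fin n)).filter (fun i : Fin n => t < y i) := by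
          intro i hi
          rw [mem_filter] at hi ⊢
          refine ⟨mem_univ _, ?_⟩
          have hle : y ⟨d, by omega⟩ ≤ y i := hya (by rw [Fin.le_def]; simp; omega)
          linarith
        have := Finset.card_le_card hsub
        rwa [filter_lt_card (show d + 1 ≤ n by omega)] at this
      have hmbn1 : mb ≤ n - 1 := by
        have hne : (⟨n - 1, by omega⟩ : Fin n) ∉
            (Finset.univ : Finset (Fin n)).filter (fun i : Fin n => t ≤ y i) := by
          rw [mem_filter]
          push_neg
          intro _
          linarith
        have hlt : mb < n := by
          rcases lt_or_eq_of_le hmbn with h | h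
          · exact h
          · exfalso
            apply hne
            have huniv : ((Finset.univ : Finset (Fin n)).filter (fun i : Fin n => t ≤ y i)) =
                Finset.univ := by
              apply Finset.eq_univ_of_card
              rw [← hmb, h]
              simp
            rw [huniv]
            exact mem_univ _
        omega
      rcases hm2or with h | h | h
      · exact claimA hya (show m2 < m by omega) hmn hmlty
      · exact claimA hya (show m2 < m by omega) hmn hmlty
      · refine claimB hya (show m < m2 by omega) (by omega) hgey
          ⟨mb, by omega⟩ (by simp <;> omega) (by simp <;> omega) (hlt_mb _ (by simp))

end EPOS
section COVER

lemma chain_lemma (T md Bt : ℝ) (h1 : Bt < md) (h2 : md < T) :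
    ∀ (m : ℕ) (L R : ℝ), L < m * T → m * Bt < R → L + T ≤ R + Bt →
      ∃ p r q : ℕ, p + r + q = m ∧ r ≤ 1 ∧
        L < p * T + r * md + q * Bt ∧ (p : ℝ) * T + r * md + q * Bt < R := by
  intro m
  induction m with
  | zero =>
    intro L R hL hR _
    refine ⟨0, 0, 0, rfl, Nat.zero_le 1, ?_, ?_⟩ <;> push_cast <;> push_cast at hL hR <;> linarith
  | succ m ih =>
    intro L R hL hR hw
    have hLr : L < ((m : ℝ) + 1) * T := by push_cast at hL; linarith
    have hRr : ((m : ℝ) + 1) * Bt < R := by push_cast at hR; linarith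
    by_cases hc : (m : ℝ) * Bt + T < R
    · obtain ⟨p, r, q, hsum, hr, hlo, hhi⟩ := ih (L - T) (R - T)
        (by linarith) (by linarith) (by linarith)
      refine ⟨p + 1, r, q, by omega, hr, ?_, ?_⟩ <;> push_cast <;> push_cast at hlo hhi <;> linarith
    · push_neg at hc
      by_cases hL2 : L < (m : ℝ) * T + Bt
      · obtain ⟨p, r, q, hsum, hr, hlo, hhi⟩ := ih (L - Bt) (R - Bt)
          (by linarith) (by linarith) (by linarith)
        refine ⟨p, r, q + 1, by omega, hr, ?_, ?_⟩ <;> push_cast <;> push_cast at hlo hhi <;> linarith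
      · push_neg at hL2
        have hm0 : m = 0 := by
          by_contra hm
          have hm1 : (1 : ℝ) ≤ (m : ℕ) := by exact_mod_cast Nat.one_le_iff_ne_zero.2 hm
          nlinarith
        subst hm0
        simp only [Nat.cast_zero, zero_mul, zero_add] at hL2 hc
        refine ⟨0, 1, 0, rfl, le_refl 1, ?_, ?_⟩ <;> push_cast <;> nlinarith

variable {A B C D b c : ℝ} {k : ℕ}

/-- conclusion of the covering lemma -/
def CovOut (A B C D b c θ : ℝ) (k : ℕ) : Prop :=
  ∃ p q r p' q' r' : ℕ, p + q + r + p' + q' + r' + 1 = k ∧ r ≤ 1 ∧ r' ≤ 1 ∧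
    ((B < θ - ((p : ℝ) * A + q * B + r * b + p' * C + q' * D + r' * c) ∧
      θ - ((p : ℝ) * A + q * B + r * b + p' * C + q' * D + r' * c) < A) ∨
     (D < θ - ((p : ℝ) * A + q * B + r * b + p' * C + q' * D + r' * c) ∧
      θ - ((p : ℝ) * A + q * B + r * b + p' * C + q' * D + r' * c) < C))

lemma covering (hAB : B < A) (hBC : C ≤ B) (hCD : D < C)
    (hbB : B < b) (hbA : b < A) (hcD : D < c) (hcC : c < C)
    (hk : 2 ≤ k)
    (cond1 : (k : ℝ) * B < ((k : ℝ) - 1) * A + C)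
    (cond2 : B + ((k : ℝ) - 1) * D < (k : ℝ) * C)
    (θ : ℝ) (hθ1 : (k : ℝ) * D < θ) (hθ2 : θ < (k : ℝ) * A) :
    CovOut A B C D b c θ k := by
  have hkR : (2 : ℝ) ≤ (k : ℝ) := by exact_mod_cast hk
  -- the two "unconditional-window" sub-claims
  have subF2 : ∀ i j : ℕ, i + j + 1 = k → C - D ≤ A - B →
      ((i : ℝ) + 1) * B + j * D < θ → θ < ((i : ℝ) + 1) * A + j * C →
      CovOut A B C D b c θ k := by
    intro i j hij hcs hlo hhi
    obtain ⟨p', r', q', hs', hr', hlo', hhi'⟩ :=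
      chain_lemma C c D hcD hcC j (θ - ((i : ℝ) + 1) * A) (θ - ((i : ℝ) + 1) * B)
        (by linarith) (by linarith)
        (by nlinarith [Nat.cast_nonneg (α := ℝ) i])
    set v : ℝ := (p' : ℝ) * C + r' * c + q' * D with hv
    obtain ⟨p, r, q, hs, hr, hlo2, hhi2⟩ :=
      chain_lemma A b B hbB hbA i (θ - v - A) (θ - v - B)
        (by linarith) (by linarith) (by linarith)
    refine ⟨p, q, r, p', q', r', by omega, hr, hr', Or.inl ⟨by linarith, by linarith⟩⟩
  have subF1 : ∀ i j : ℕ, i + j + 1 = k → A - B ≤ C - D →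
      (i : ℝ) * B + ((j : ℝ) + 1) * D < θ → θ < (i : ℝ) * A + ((j : ℝ) + 1) * C →
      CovOut A B C D b c θ k := by
    intro i j hij hcs hlo hhi
    obtain ⟨p, r, q, hs, hr, hlo2, hhi2⟩ :=
      chain_lemma A b B hbB hbA i (θ - ((j : ℝ) + 1) * C) (θ - ((j : ℝ) + 1) * D)
        (by linarith) (by linarith)
        (by nlinarith [Nat.cast_nonneg (α := ℝ) j])
    set u : ℝ := (p : ℝ) * A + r * b + q * B with hu
    obtain ⟨p', r', q', hs', hr', hlo', hhi'⟩ :=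
      chain_lemma C c D hcD hcC j (θ - u - C) (θ - u - D)
        (by linarith) (by linarith) (by linarith)
    refine ⟨p, q, r, p', q', r', by omega, hr, hr', Or.inr ⟨by linarith, by linarith⟩⟩
  have subTop : (k : ℝ) * B < θ → CovOut A B C D b c θ k := by
    intro hB
    obtain ⟨K1, hK1⟩ : ∃ K1, K1 + 1 = k := ⟨k - 1, by omega⟩
    have hK1R : (K1 : ℝ) + 1 = (k : ℝ) := by exact_mod_cast hK1
    have hA2 : (k : ℝ) * A = (K1 : ℝ) * A + A := by rw [← hK1R]; ring
    have hB2 : (k : ℝ) * B = (K1 : ℝ) * B + B := by rw [← hK1R]; ring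
    obtain ⟨p, r, q, hs, hr, hlo2, hhi2⟩ :=
      chain_lemma A b B hbB hbA K1 (θ - A) (θ - B)
        (by linarith) (by linarith) (by linarith)
    exact ⟨p, q, r, 0, 0, 0, by omega, hr, by omega,
      Or.inl ⟨by push_cast; linarith, by push_cast; linarith⟩⟩
  have subBot : θ < (k : ℝ) * C → CovOut A B C D b c θ k := by
    intro hC
    obtain ⟨K1, hK1⟩ : ∃ K1, K1 + 1 = k := ⟨k - 1, by omega⟩
    have hK1R : (K1 : ℝ) + 1 = (k : ℝ) := by exact_mod_cast hK1
    have hC2 : (k : ℝ) * C = (K1 : ℝ) * C + C := by rw [← hK1R]; ring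
    have hD2 : (k : ℝ) * D = (K1 : ℝ) * D + D := by rw [← hK1R]; ring
    obtain ⟨p', r', q', hs', hr', hlo', hhi'⟩ :=
      chain_lemma C c D hcD hcC K1 (θ - C) (θ - D)
        (by linarith) (by linarith) (by linarith)
    exact ⟨0, 0, 0, p', q', r', by omega, by omega, hr',
      Or.inr ⟨by push_cast; linarith, by push_cast; linarith⟩⟩
  -- the key linear-combination inequality
  have hcond1' : B - C < ((k : ℝ) - 1) * (A - B) := by nlinarith
  have hcond2' : B - C < ((k : ℝ) - 1) * (C - D) := by nlinarith
  have keyLC : ∀ a e : ℕ, (a : ℝ) + e = (k : ℝ) - 1 → 1 ≤ a →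
      B - C < (a : ℝ) * (A - B) + (e : ℝ) * (C - D) := by
    intro a e hae ha
    have haR : (1 : ℝ) ≤ (a : ℝ) := by exact_mod_cast ha
    have e1 : (0 : ℝ) < (a : ℝ) * (((k : ℝ) - 1) * (A - B) - (B - C)) :=
      mul_pos (by linarith) (by linarith)
    have e2 : (0 : ℝ) ≤ (e : ℝ) * (((k : ℝ) - 1) * (C - D) - (B - C)) :=
      mul_nonneg (Nat.cast_nonneg e) (by linarith)
    have hk1 : (0 : ℝ) < (k : ℝ) - 1 := by linarith
    nlinarith [e1, e2]
  have keyLC2 : ∀ a e : ℕ, (a : ℝ) + e = (k : ℝ) - 1 → 1 ≤ e →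
      B - C < (a : ℝ) * (A - B) + (e : ℝ) * (C - D) := by
    intro a e hae he
    have heR : (1 : ℝ) ≤ (e : ℝ) := by exact_mod_cast he
    have e1 : (0 : ℝ) ≤ (a : ℝ) * (((k : ℝ) - 1) * (A - B) - (B - C)) :=
      mul_nonneg (Nat.cast_nonneg a) (by linarith)
    have e2 : (0 : ℝ) < (e : ℝ) * (((k : ℝ) - 1) * (C - D) - (B - C)) :=
      mul_pos (by linarith) (by linarith)
    have hk1 : (0 : ℝ) < (k : ℝ) - 1 := by linarith
    nlinarith [e1, e2]
  by_cases hTop : (k : ℝ) * B < θ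
  · exact subTop hTop
  push_neg at hTop
  by_cases hBot : θ < (k : ℝ) * C
  · exact subBot hBot
  push_neg at hBot
  by_cases hcs : C - D ≤ A - B
  · -- descending induction through the F2 family
    have claimA : ∀ j i : ℕ, i + j + 1 = k → ((i : ℝ) + 1) * B + j * D < θ →
        CovOut A B C D b c θ k := by
      intro j
      induction j with
      | zero =>
        intro i hij hlo
        apply subTop
        have hi1 : i + 1 = k := by omega
        have hiR : (i : ℝ) + 1 = (k : ℝ) := by exact_mod_cast hi1
        have hBB : ((i : ℝ) + 1) * B = (k : ℝ) * B := by rw [hiR]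
        push_cast at hlo
        linarith
      | succ j ih =>
        intro i hij hlo
        by_cases h' : ((i : ℝ) + 1 + 1) * B + j * D < θ
        · apply ih (i + 1) (by omega)
          push_cast
          linarith
        · push_neg at h'
          have hij2 : i + j + 2 = k := by omega
          have hijR : (i : ℝ) + (j : ℝ) + 2 = (k : ℝ) := by exact_mod_cast hij2
          have hLC := keyLC (i + 1) j (by push_cast; linarith) (by omega)
          push_cast at hLC
          apply subF2 i (j + 1) hij hcs (by push_cast; push_cast at hlo; linarith)
          push_cast
          push_cast at h'
          linarith
    apply claimA (k - 1) 0 (by omega)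
    have hkc : ((k - 1 : ℕ) : ℝ) = (k : ℝ) - 1 := by
      rw [Nat.cast_sub (by omega)]; simp
    rw [hkc]
    push_cast
    linarith
  · push_neg at hcs
    have claimB : ∀ i j : ℕ, i + j + 1 = k → θ < (i : ℝ) * A + ((j : ℝ) + 1) * C →
        CovOut A B C D b c θ k := by
      intro i
      induction i with
      | zero =>
        intro j hij hhi
        apply subBot
        have hj1 : j + 1 = k := by omega
        have hjR : (j : ℝ) + 1 = (k : ℝ) := by exact_mod_cast hj1
        have hCC : ((j : ℝ) + 1) * C = (k : ℝ) * C := by rw [hjR]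
        push_cast at hhi
        linarith
      | succ i ih =>
        intro j hij hhi
        by_cases h' : θ < (i : ℝ) * A + ((j : ℝ) + 1 + 1) * C
        · apply ih (j + 1) (by omega)
          push_cast
          linarith
        · push_neg at h'
          have hij2 : i + j + 2 = k := by omega
          have hijR : (i : ℝ) + (j : ℝ) + 2 = (k : ℝ) := by exact_mod_cast hij2
          have hLC := keyLC2 i (j + 1) (by push_cast; linarith) (by omega)
          push_cast at hLC
          apply subF1 (i + 1) j hij (le_of_lt hcs) ?_ (by push_cast; push_cast at hhi; linarith)
          push_cast
          linarith
    apply claimB (k - 1) 0 (by omega)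
    have hkc : ((k - 1 : ℕ) : ℝ) = (k : ℝ) - 1 := by
      rw [Nat.cast_sub (by omega)]; simp
    rw [hkc]
    push_cast
    linarith

end COVER
section KDFACTS

variable {n : ℕ}

lemma take_antitone {d : ℕ} (x : Fin n → ℝ) (h : d ≤ n) (hx : Antitone x) :
    Antitone (take x d h) := by
  intro i j hij
  apply hx
  rw [Fin.le_def] at hij ⊢
  simpa using hij

lemma drop_antitone {d : ℕ} (x : Fin n → ℝ) (hx : Antitone x) :
    Antitone (drop x d) := by
  intro i j hij
  apply hx
  rw [Fin.le_def] at hij ⊢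
  simp only
  omega

lemma eSum_take {d : ℕ} (x : Fin n → ℝ) (h : d ≤ n) (hx : Antitone x) {l : ℕ} (hl : l ≤ d) :
    eSum (take x d h) l = eSum x l := by
  rw [eSum_sorted (take_antitone x h hx) hl, eSum_sorted hx (le_trans hl h),
    sum_filter_lt _ hl, sum_filter_lt _ (le_trans hl h)]
  exact Finset.sum_congr rfl (fun t _ => rfl)

lemma eSum_full (v : Fin n → ℝ) (hv : Antitone v) : eSum v n = ∑ i, v i := by
  rw [eSum_sorted hv (le_refl n)]
  apply Finset.sum_congr _ (fun _ _ => rfl)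
  ext i
  simp [i.isLt]

lemma eSum_drop_add {d : ℕ} (x : Fin n → ℝ) (hx : Antitone x) (hdn : d ≤ n) :
    ∀ l : ℕ, l ≤ n - d → eSum x d + eSum (drop x d) l = eSum x (d + l) := by
  intro l
  induction l with
  | zero => intro _; rw [eSum_zero]; ring_nf
  | succ l ih =>
    intro hl
    have hl' : l ≤ n - d := by omega
    have h1 : l + 1 ≤ n - d := hl
    have h2 : d + l + 1 ≤ n := by omega
    rw [eSum_succ (drop_antitone x hx) h1, show d + (l + 1) = (d + l) + 1 by omega,
      eSum_succ hx h2, ← ih hl']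
    have : drop x d ⟨l, by omega⟩ = x ⟨d + l, by omega⟩ := rfl
    rw [this]
    ring

lemma sum_tpow (v : Fin n → ℝ) (k : ℕ) : ∑ m, tpow v k m = (∑ i, v i) ^ k := by
  rw [← Equiv.sum_comp (finFunctionFinEquiv (m := n) (n := k)) (tpow v k)]
  have h1 : ∀ f : Fin k → Fin n, tpow v k (finFunctionFinEquiv f) = ∏ j, v (f j) :=
    fun f => tpow_ffe v k f
  rw [Finset.sum_congr rfl (fun f _ => h1 f)]
  rw [← Fintype.piFinset_univ, ← Finset.prod_univ_sum (fun _ : Fin k => Finset.univ)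
    (fun _ i => v i)]
  rw [Finset.prod_const]
  simp

lemma sum_tpow_box (v : Fin n → ℝ) (k : ℕ) (S₀ : Finset (Fin n)) :
    ∑ m ∈ (Fintype.piFinset fun _ : Fin k => S₀).image ⇑finFunctionFinEquiv, tpow v k m
      = (∑ i ∈ S₀, v i) ^ k := by
  rw [Finset.sum_image (fun a _ b _ h => finFunctionFinEquiv.injective h)]
  rw [Finset.sum_congr rfl (fun f _ => tpow_ffe v k f)]
  rw [← Finset.prod_univ_sum (fun _ : Fin k => S₀) (fun _ i => v i)]
  rw [Finset.prod_const]
  simp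

lemma tpow_le {v : Fin n → ℝ} (hv : Antitone v) (hpos : ∀ i, 0 < v i) (hn : 0 < n)
    (k : ℕ) (m : Fin (n ^ k)) :
    v ⟨n - 1, by omega⟩ ^ k ≤ tpow v k m ∧ tpow v k m ≤ v ⟨0, hn⟩ ^ k := by
  constructor
  · have : v ⟨n - 1, by omega⟩ ^ k = ∏ _j : Fin k, v ⟨n - 1, by omega⟩ := by
      rw [Finset.prod_const]; simp
    rw [this]
    apply Finset.prod_le_prod (fun j _ => (hpos _).le)
    intro j _
    apply hv
    rw [Fin.le_def]
    have := (finFunctionFinEquiv.symm m j).isLt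
    simp only [Fin.val_mk]
    omega
  · have : v ⟨0, hn⟩ ^ k = ∏ _j : Fin k, v ⟨0, hn⟩ := by
      rw [Finset.prod_const]; simp
    rw [this]
    apply Finset.prod_le_prod (fun j _ => (hpos _).le)
    intro j _
    apply hv
    rw [Fin.le_def]
    simp

end KDFACTS
section FORWARD

variable {n : ℕ}

lemma forward1 {d k : ℕ} (hd1 : 1 < d) (hd2 : d + 1 < n) (hk : 1 ≤ k)
    {x y : Fin n → ℝ} (hxa : Antitone x) (hya : Antitone y) (hypos : ∀ i, 0 < y i)
    (hed : eSum x d = eSum y d)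
    (hnc : y ⟨0, by linarith⟩ ^ (k - 1) * y ⟨d, by linarith⟩ ≤ y ⟨d - 1, Nat.lt_of_le_of_lt (Nat.sub_le d 1) (by linarith)⟩ ^ k)
    (hsm : SMaj (tpow x k) (tpow y k)) : False := by
  set S₀ := (Finset.univ : Finset (Fin n)).filter (fun i : Fin n => (i : ℕ) < d) with hS₀
  set S := (Fintype.piFinset fun _ : Fin k => S₀).image ⇑finFunctionFinEquiv with hS
  have hcS0 : S₀.card = d := filter_lt_card (by omega)
  have hcS : S.card = d ^ k := by
    rw [hS, Finset.card_image_of_injective _ finFunctionFinEquiv.injective,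
      Fintype.card_piFinset]
    simp [hcS0]
  have htop : ∀ a ∈ S, ∀ b, b ∉ S → tpow y k b ≤ tpow y k a := by
    intro a ha b hb
    rw [hS, Finset.mem_image] at ha
    obtain ⟨f, hf, rfl⟩ := ha
    rw [Fintype.mem_piFinset] at hf
    have hflt : ∀ j, ((f j : ℕ)) < d := by
      intro j
      have hfj := hf j
      rw [hS₀, mem_filter] at hfj
      exact hfj.2
    have hlow : y ⟨d - 1, by omega⟩ ^ k ≤ tpow y k (finFunctionFinEquiv f) := by
      rw [tpow_ffe]
      have hcst : y ⟨d - 1, by omega⟩ ^ k = ∏ _j : Fin k, y ⟨d - 1, by omega⟩ := by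
        rw [Finset.prod_const]; simp
      rw [hcst]
      apply Finset.prod_le_prod (fun j _ => (hypos _).le)
      intro j _
      apply hya
      rw [Fin.le_def]
      simp only [Fin.val_mk]
      have := hflt j
      omega
    set g := finFunctionFinEquiv.symm b with hg
    have hgex : ∃ j₀, d ≤ ((g j₀ : ℕ)) := by
      by_contra hcon
      push_neg at hcon
      apply hb
      rw [hS, Finset.mem_image]
      refine ⟨g, ?_, by rw [hg]; simp⟩
      rw [Fintype.mem_piFinset]
      intro j
      rw [hS₀, mem_filter]
      exact ⟨mem_univ _, by have := hcon j; omega⟩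
    obtain ⟨j₀, hj₀⟩ := hgex
    have hup : tpow y k b ≤ y ⟨0, by omega⟩ ^ (k - 1) * y ⟨d, by omega⟩ := by
      have hform : tpow y k b = y (g j₀) * ∏ j ∈ Finset.univ.erase j₀, y (g j) := by
        rw [show tpow y k b = ∏ j, y (g j) from rfl,
          ← Finset.mul_prod_erase Finset.univ _ (mem_univ j₀)]
      rw [hform]
      have h1 : y (g j₀) ≤ y ⟨d, by omega⟩ := by
        apply hya
        rw [Fin.le_def]
        simp only [Fin.val_mk]
        omega
      have h2 : ∏ j ∈ Finset.univ.erase j₀, y (g j) ≤ y ⟨0, by omega⟩ ^ (k - 1) := by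
        have hcst : y ⟨0, by omega⟩ ^ (k - 1)
            = ∏ _j ∈ Finset.univ.erase j₀, y ⟨0, by omega⟩ := by
          rw [Finset.prod_const, Finset.card_erase_of_mem (mem_univ j₀)]
          simp
        rw [hcst]
        apply Finset.prod_le_prod (fun j _ => (hypos _).le)
        intro j _
        apply hya
        rw [Fin.le_def]
        simp only [Fin.val_mk]
        omega
      calc y (g j₀) * ∏ j ∈ Finset.univ.erase j₀, y (g j)
          ≤ y ⟨d, by omega⟩ * (y ⟨0, by omega⟩ ^ (k - 1)) :=
            mul_le_mul h1 h2 (Finset.prod_nonneg fun j _ => (hypos _).le) (hypos _).le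
        _ = y ⟨0, by omega⟩ ^ (k - 1) * y ⟨d, by omega⟩ := by ring
    calc tpow y k b ≤ y ⟨0, by omega⟩ ^ (k - 1) * y ⟨d, by omega⟩ := hup
      _ ≤ y ⟨d - 1, by omega⟩ ^ k := hnc
      _ ≤ tpow y k (finFunctionFinEquiv f) := hlow
  have hYS : eSum (tpow y k) (d ^ k) = (eSum y d) ^ k := by
    have h0 := eSum_topset (x := tpow y k) (S := S) htop
    rw [hcS] at h0
    rw [h0, hS, sum_tpow_box, hS₀, ← eSum_sorted hya (show d ≤ n by omega)]
  have hXS : (eSum x d) ^ k ≤ eSum (tpow x k) (d ^ k) := by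
    have h1 : ∑ m ∈ S, tpow x k m ≤ eSum (tpow x k) S.card := sum_le_eSum _ rfl
    rw [hcS, hS, sum_tpow_box] at h1
    rw [eSum_sorted hxa (show d ≤ n by omega), ← hS₀]
    exact h1
  have hlt := hsm.2 (d ^ k) (Nat.one_le_pow _ _ (by omega)) (by
    have := Nat.pow_lt_pow_left (show d < n by omega) (show k ≠ 0 by omega)
    omega)
  rw [hYS] at hlt
  rw [hed] at hXS
  linarith

lemma forward2 {d k : ℕ} (hd1 : 1 < d) (hd2 : d + 1 < n) (hk : 1 ≤ k)
    {x y : Fin n → ℝ} (hxa : Antitone x) (hya : Antitone y) (hypos : ∀ i, 0 < y i)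
    (hed : eSum x d = eSum y d) (hsx : ∑ i, x i = 1) (hsy : ∑ i, y i = 1)
    (hnc : y ⟨d, by linarith⟩ ^ k ≤ y ⟨d - 1, Nat.lt_of_le_of_lt (Nat.sub_le d 1) (by linarith)⟩ * y ⟨n - 1, Nat.sub_lt (by linarith) Nat.one_pos⟩ ^ (k - 1))
    (hsm : SMaj (tpow x k) (tpow y k)) : False := by
  set B₀ := (Finset.univ : Finset (Fin n)).filter (fun i : Fin n => ¬ (i : ℕ) < d) with hB₀
  set SB := (Fintype.piFinset fun _ : Fin k => B₀).image ⇑finFunctionFinEquiv with hSB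
  have hcB0 : B₀.card = n - d := by
    have h2 := Finset.card_filter_add_card_filter_not
      (s := (Finset.univ : Finset (Fin n))) (p := fun i : Fin n => (i : ℕ) < d)
    have h1 : ((Finset.univ : Finset (Fin n)).filter (fun i : Fin n => (i : ℕ) < d)).card = d :=
      filter_lt_card (by omega)
    rw [hB₀]
    have h3 : (Finset.univ : Finset (Fin n)).card = n := by simp
    omega
  have hcSB : SB.card = (n - d) ^ k := by
    rw [hSB, Finset.card_image_of_injective _ finFunctionFinEquiv.injective,
      Fintype.card_piFinset]
    simp [hcB0]
  set l := n ^ k - (n - d) ^ k with hl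
  set S := (Finset.univ : Finset (Fin (n ^ k))) \ SB with hSdef
  have hcS : S.card = l := by
    rw [hSdef, Finset.card_sdiff_of_subset (Finset.subset_univ _), hcSB]
    simp [hl]
  have htop : ∀ a ∈ S, ∀ b, b ∉ S → tpow y k b ≤ tpow y k a := by
    intro a ha b hb
    have haSB : a ∉ SB := (Finset.mem_sdiff.1 (by rwa [hSdef] at ha)).2
    have hbSB : b ∈ SB := by
      by_contra hcon
      exact hb (by rw [hSdef, Finset.mem_sdiff]; exact ⟨mem_univ _, hcon⟩)
    -- upper bound for b
    rw [hSB, Finset.mem_image] at hbSB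
    obtain ⟨f, hf, rfl⟩ := hbSB
    rw [Fintype.mem_piFinset] at hf
    have hfge : ∀ j, d ≤ ((f j : ℕ)) := by
      intro j
      have hfj := hf j
      rw [hB₀, mem_filter] at hfj
      omega
    have hup : tpow y k (finFunctionFinEquiv f) ≤ y ⟨d, by omega⟩ ^ k := by
      rw [tpow_ffe]
      have hcst : y ⟨d, by omega⟩ ^ k = ∏ _j : Fin k, y ⟨d, by omega⟩ := by
        rw [Finset.prod_const]; simp
      rw [hcst]
      apply Finset.prod_le_prod (fun j _ => (hypos _).le)
      intro j _
      apply hya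
      rw [Fin.le_def]
      simp only [Fin.val_mk]
      exact hfge j
    -- lower bound for a
    set g := finFunctionFinEquiv.symm a with hg
    have hgex : ∃ j₀, ((g j₀ : ℕ)) < d := by
      by_contra hcon
      push_neg at hcon
      apply haSB
      rw [hSB, Finset.mem_image]
      refine ⟨g, ?_, by rw [hg]; simp⟩
      rw [Fintype.mem_piFinset]
      intro j
      rw [hB₀, mem_filter]
      exact ⟨mem_univ _, by have := hcon j; omega⟩
    obtain ⟨j₀, hj₀⟩ := hgex
    have hlow : y ⟨d - 1, by omega⟩ * y ⟨n - 1, by omega⟩ ^ (k - 1) ≤ tpow y k a := by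
      have hform : tpow y k a = y (g j₀) * ∏ j ∈ Finset.univ.erase j₀, y (g j) := by
        rw [show tpow y k a = ∏ j, y (g j) from rfl,
          ← Finset.mul_prod_erase Finset.univ _ (mem_univ j₀)]
      rw [hform]
      have h1 : y ⟨d - 1, by omega⟩ ≤ y (g j₀) := by
        apply hya
        rw [Fin.le_def]
        simp only [Fin.val_mk]
        omega
      have h2 : y ⟨n - 1, by omega⟩ ^ (k - 1) ≤ ∏ j ∈ Finset.univ.erase j₀, y (g j) := by
        have hcst : y ⟨n - 1, by omega⟩ ^ (k - 1)
            = ∏ _j ∈ Finset.univ.erase j₀, y ⟨n - 1, by omega⟩ := by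
          rw [Finset.prod_const, Finset.card_erase_of_mem (mem_univ j₀)]
          simp
        rw [hcst]
        apply Finset.prod_le_prod (fun j _ => (hypos _).le)
        intro j _
        apply hya
        rw [Fin.le_def]
        simp only [Fin.val_mk]
        have := (g j).isLt
        omega
      exact mul_le_mul h1 h2 (pow_nonneg (hypos _).le _) (hypos _).le
    calc tpow y k (finFunctionFinEquiv f) ≤ y ⟨d, by omega⟩ ^ k := hup
      _ ≤ y ⟨d - 1, by omega⟩ * y ⟨n - 1, by omega⟩ ^ (k - 1) := hnc
      _ ≤ tpow y k a := hlow
  have hsum_B0 : ∀ v : Fin n → ℝ, Antitone v → (∑ i, v i) = 1 →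
      ∑ i ∈ B₀, v i = 1 - eSum v d := by
    intro v hv hsv
    have h2 := Finset.sum_filter_add_sum_filter_not
      (Finset.univ : Finset (Fin n)) (fun i : Fin n => (i : ℕ) < d) v
    have h3 : eSum v d = ∑ i ∈ (Finset.univ : Finset (Fin n)).filter
        (fun i : Fin n => (i : ℕ) < d), v i := eSum_sorted hv (by omega)
    rw [hB₀]
    linarith [h2, h3, hsv]
  have hYS : eSum (tpow y k) l = 1 - (1 - eSum y d) ^ k := by
    have h0 := eSum_topset (x := tpow y k) (S := S) htop
    rw [hcS] at h0
    rw [h0, hSdef, Finset.sum_sdiff_eq_sub (Finset.subset_univ _), hSB, sum_tpow_box,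
      sum_tpow, hsy, hsum_B0 y hya hsy]
    simp
  have hXS : 1 - (1 - eSum x d) ^ k ≤ eSum (tpow x k) l := by
    have h1 : ∑ m ∈ S, tpow x k m ≤ eSum (tpow x k) S.card := sum_le_eSum _ rfl
    rw [hcS, hSdef, Finset.sum_sdiff_eq_sub (Finset.subset_univ _), hSB, sum_tpow_box,
      sum_tpow, hsx, hsum_B0 x hxa hsx] at h1
    simpa using h1
  have hnd1 : 1 ≤ (n - d) ^ k := Nat.one_le_pow _ _ (by omega)
  have hndlt : (n - d) ^ k < n ^ k := Nat.pow_lt_pow_left (by omega) (by omega)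
  have hlt := hsm.2 l (by omega) (by omega)
  rw [hYS] at hlt
  rw [hed] at hXS
  linarith

end FORWARD
lemma comp_lt {n : ℕ} {x y : Fin n → ℝ} (hxa : Antitone x) (hya : Antitone y) {m : ℕ}
    (h : m + 1 ≤ n) (hlt : eSum x m < eSum y m) (hge : eSum y (m + 1) ≤ eSum x (m + 1)) :
    y ⟨m, h⟩ < x ⟨m, h⟩ := by
  have e1 := eSum_succ hxa h
  have e2 := eSum_succ hya h
  linarith

end S17


set_option maxHeartbeats 2000000
open S17

/-- Lemma 13 of the paper. For `x ∈ K_d(y)` (nonempty since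
`y_1 > y_d` and `y_{d+1} > y_n`): `x^{⊗k} ◁ y^{⊗k}` iff
`y_d^k < y_1^{k-1} y_{d+1}` and `y_{d+1}^k > y_d y_n^{k-1}` (1-based indices
in the informal statement, 0-based here). -/
theorem stmt17 {n : ℕ} (d k : ℕ) (hd1 : 1 < d) (hd2 : d + 1 < n) (hk : 1 ≤ k)
    (y : Fin n → ℝ) (hy : y ∈ Vn n) (hypos : ∀ i, 0 < y i)
    (hne1 : y ⟨0, by omega⟩ > y ⟨d - 1, by omega⟩)
    (hne2 : y ⟨d, by omega⟩ > y ⟨n - 1, by omega⟩) :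
    ∀ x ∈ Kd y d (by omega),
      (SMaj (tpow x k) (tpow y k) ↔
        (y ⟨d - 1, by omega⟩ ^ k < y ⟨0, by omega⟩ ^ (k - 1) * y ⟨d, by omega⟩ ∧
         y ⟨d, by omega⟩ ^ k > y ⟨d - 1, by omega⟩ * y ⟨n - 1, by omega⟩ ^ (k - 1))) := by
  intro x hx
  obtain ⟨hxV, hT, hDr⟩ := hx
  obtain ⟨hynn, hysum, hya⟩ := hy
  obtain ⟨hxnn, hxsum, hxa⟩ := hxV
  have hdn : d ≤ n := by omega
  have hed : eSum x d = eSum y d := by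
    have h2 : ∀ v : Fin n → ℝ, Antitone v → eSum v d = ∑ i, take v d hdn i := by
      intro v hv
      rw [← eSum_take v hdn hv (le_refl d), eSum_full _ (take_antitone v hdn hv)]
    rw [h2 x hxa, h2 y hya]
    exact hT.1
  have hen : eSum x n = eSum y n := by
    rw [eSum_full x hxa, eSum_full y hya, hxsum, hysum]
  have hlt' : ∀ m, 1 ≤ m → m + 1 ≤ n → m ≠ d → eSum x m < eSum y m := by
    intro m hm1 hm2 hmd
    rcases lt_or_gt_of_ne hmd with hlt | hgt
    · have h3 := hT.2 m hm1 (by omega)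
      rwa [eSum_take x hdn hxa (by omega), eSum_take y hdn hya (by omega)] at h3
    · have hj1 : 1 ≤ m - d := by omega
      have hj2 : (m - d) + 1 ≤ n - d := by omega
      have h3 := hDr.2 (m - d) hj1 hj2
      have h4 := eSum_drop_add x hxa hdn (m - d) (by omega)
      have h5 := eSum_drop_add y hya hdn (m - d) (by omega)
      rw [show d + (m - d) = m by omega] at h4 h5
      linarith
  have hM : ∀ m, m ≤ n → eSum x m ≤ eSum y m := by
    intro m hm
    by_cases h0 : m = 0
    · subst h0; rw [eSum_zero, eSum_zero]
    by_cases hd' : m = d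
    · subst hd'; exact le_of_eq hed
    by_cases hn' : m = n
    · subst hn'; exact le_of_eq hen
    exact (hlt' m (by omega) (by omega) hd').le
  have hcomp : ∀ (v : Fin n → ℝ), Antitone v → ∀ m (h : m + 1 ≤ n),
      v ⟨m, h⟩ = eSum v (m + 1) - eSum v m := by
    intro v hv m h
    rw [eSum_succ hv h]
    ring
  have hx0 : x ⟨0, by omega⟩ < y ⟨0, by omega⟩ := by
    have h1 := hcomp x hxa 0 (by omega)
    have h2 := hcomp y hya 0 (by omega)
    have h3 := hlt' 1 (by omega) (by omega) (by omega)
    rw [eSum_zero] at h1 h2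
    rw [h1, h2]
    linarith
  have hxd1 : y ⟨d - 1, by omega⟩ < x ⟨d - 1, by omega⟩ := by
    apply comp_lt hxa hya (show (d - 1) + 1 ≤ n by omega)
      (hlt' (d - 1) (by omega) (by omega) (by omega))
    rw [show d - 1 + 1 = d by omega]
    exact le_of_eq hed.symm
  have hxd : x ⟨d, by omega⟩ < y ⟨d, by omega⟩ := by
    have h1 := hcomp x hxa d (by omega)
    have h2 := hcomp y hya d (by omega)
    have h3 := hlt' (d + 1) (by omega) (by omega) (by omega)
    rw [h1, h2]
    linarith
  have hxn1 : y ⟨n - 1, by omega⟩ < x ⟨n - 1, by omega⟩ := by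
    apply comp_lt hxa hya (show (n - 1) + 1 ≤ n by omega)
      (hlt' (n - 1) (by omega) (by omega) (by omega))
    rw [show n - 1 + 1 = n by omega]
    exact le_of_eq hen.symm
  have hxpos : ∀ i, 0 < x i := by
    intro i
    have h1 : x ⟨n - 1, by omega⟩ ≤ x i := by
      apply hxa
      rw [Fin.le_def]
      simp only [Fin.val_mk]
      have := i.isLt
      omega
    have h2 := hypos ⟨n - 1, by omega⟩
    linarith
  constructor
  · intro hsm
    constructor
    · by_contra hnc
      push_neg at hnc
      exact forward1 hd1 hd2 hk hxa hya hypos hed hnc hsm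
    · by_contra hnc
      push_neg at hnc
      exact forward2 hd1 hd2 hk hxa hya hypos hed hxsum hysum hnc hsm
  · rintro ⟨hc1, hc2⟩
    have hk2 : 2 ≤ k := by
      by_contra hk2
      have hk1 : k = 1 := by omega
      subst hk1
      simp only [pow_one, Nat.sub_self, pow_zero, one_mul] at hc1
      have hge : y ⟨d, by omega⟩ ≤ y ⟨d - 1, by omega⟩ := by
        apply hya
        rw [Fin.le_def]
        simp only [Fin.val_mk]
        omega
      linarith
    constructor
    · rw [sum_tpow, sum_tpow, hxsum, hysum]
    · intro l hl1 hl2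
      by_contra hcon
      push_neg at hcon
      obtain ⟨θ, hθ⟩ := exists_theta (tpow y k) hl2
      have hXle := eSum_le_Phi (tpow x k) (show l ≤ n ^ k by omega) θ
      have hDnn := Dlt_nonneg hxpos hypos hM k θ
      unfold Dlt at hDnn
      have hEq1 : eSum (tpow x k) l = l * θ + Phi (tpow x k) θ := by linarith
      have hPhiEq : Phi (tpow y k) θ = Phi (tpow x k) θ := by linarith
      obtain ⟨⟨m1, hm1⟩, ⟨m2, hm2⟩⟩ := bracket hl1 hl2 hEq1
      have hn0 : 0 < n := by omega
      have hb1 := (tpow_le hxa hxpos hn0 k m1).1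
      have hb2 := (tpow_le hxa hxpos hn0 k m2).2
      have hθlb : x ⟨n - 1, by omega⟩ ^ k ≤ θ := le_trans hb1 hm1
      have hθub : θ ≤ x ⟨0, hn0⟩ ^ k := le_trans hm2 hb2
      have hkne : k ≠ 0 := by omega
      have hylb : y ⟨n - 1, by omega⟩ ^ k < θ :=
        lt_of_lt_of_le (pow_lt_pow_left₀ hxn1 (hypos _).le hkne) hθlb
      have hyub : θ < y ⟨0, by omega⟩ ^ k :=
        lt_of_le_of_lt hθub (pow_lt_pow_left₀ hx0 (hxpos _).le hkne)
      have hθpos : 0 < θ := lt_of_lt_of_le (pow_pos (hxpos _) k) hθlb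
      -- positivity of the letters
      have hα : (0:ℝ) < y ⟨0, by omega⟩ := hypos _
      have hβ : (0:ℝ) < y ⟨d - 1, by omega⟩ := hypos _
      have hγ : (0:ℝ) < y ⟨d, by omega⟩ := hypos _
      have hδ : (0:ℝ) < y ⟨n - 1, by omega⟩ := hypos _
      have hxb : (0:ℝ) < x ⟨d - 1, by omega⟩ := hxpos _
      have hxc : (0:ℝ) < x ⟨d, by omega⟩ := hxpos _
      -- order relations between letters
      have hβγ : y ⟨d, by omega⟩ ≤ y ⟨d - 1, by omega⟩ := by
        apply hya; rw [Fin.le_def]; simp only [Fin.val_mk]; omega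
      have hxbα : x ⟨d - 1, by omega⟩ < y ⟨0, by omega⟩ := by
        have : x ⟨d - 1, by omega⟩ ≤ x ⟨0, by omega⟩ := by
          apply hxa; rw [Fin.le_def]; simp only [Fin.val_mk]; omega
        linarith
      have hxcδ : y ⟨n - 1, by omega⟩ < x ⟨d, by omega⟩ := by
        have : x ⟨n - 1, by omega⟩ ≤ x ⟨d, by omega⟩ := by
          apply hxa; rw [Fin.le_def]; simp only [Fin.val_mk]; omega
        linarith
      have hxcγ : x ⟨d, by omega⟩ < y ⟨d, by omega⟩ := hxd
      -- the covering lemma, in log coordinates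
      have hkm1 : ((k - 1 : ℕ) : ℝ) = (k : ℝ) - 1 := by
        rw [Nat.cast_sub (by omega)]; simp
      have hcond1 : (k : ℝ) * Real.log (y ⟨d - 1, by omega⟩) <
          ((k : ℝ) - 1) * Real.log (y ⟨0, by omega⟩) + Real.log (y ⟨d, by omega⟩) := by
        have h1 := Real.log_lt_log (pow_pos hβ k) hc1
        rw [Real.log_pow, Real.log_mul (by positivity) (by positivity), Real.log_pow,
          hkm1] at h1
        exact h1
      have hcond2 : Real.log (y ⟨d - 1, by omega⟩) +
            ((k : ℝ) - 1) * Real.log (y ⟨n - 1, by omega⟩) <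
          (k : ℝ) * Real.log (y ⟨d, by omega⟩) := by
        have h1 := Real.log_lt_log (by positivity) hc2
        rw [Real.log_pow, Real.log_mul (by positivity) (by positivity), Real.log_pow,
          hkm1] at h1
        exact h1
      have hθl1 : (k : ℝ) * Real.log (y ⟨n - 1, by omega⟩) < Real.log θ := by
        have h1 := Real.log_lt_log (pow_pos hδ k) hylb
        rwa [Real.log_pow] at h1
      have hθl2 : Real.log θ < (k : ℝ) * Real.log (y ⟨0, by omega⟩) := by
        have h1 := Real.log_lt_log hθpos hyub
        rwa [Real.log_pow] at h1
      have hcov := covering (A := Real.log (y ⟨0, by omega⟩))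
        (B := Real.log (y ⟨d - 1, by omega⟩)) (C := Real.log (y ⟨d, by omega⟩))
        (D := Real.log (y ⟨n - 1, by omega⟩)) (b := Real.log (x ⟨d - 1, by omega⟩))
        (c := Real.log (x ⟨d, by omega⟩)) (k := k)
        (Real.log_lt_log hβ hne1) (Real.log_le_log hγ hβγ) (Real.log_lt_log hδ hne2)
        (Real.log_lt_log hβ hxd1) (Real.log_lt_log hxb hxbα)
        (Real.log_lt_log hδ hxcδ) (Real.log_lt_log hxc hxcγ)
        hk2 hcond1 hcond2 (Real.log θ) hθl1 hθl2
      unfold CovOut at hcov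
      obtain ⟨p, q, r, p', q', r', hsum, hr, hr', hdisj⟩ := hcov
      set w : ℝ := (y ⟨0, by omega⟩) ^ p * (y ⟨d - 1, by omega⟩) ^ q *
        (x ⟨d - 1, by omega⟩) ^ r * (y ⟨d, by omega⟩) ^ p' *
        (y ⟨n - 1, by omega⟩) ^ q' * (x ⟨d, by omega⟩) ^ r' with hwdef
      have hwpos : 0 < w := by rw [hwdef]; positivity
      have hlogw : Real.log w = (p : ℝ) * Real.log (y ⟨0, by omega⟩) +
          (q : ℝ) * Real.log (y ⟨d - 1, by omega⟩) +
          (r : ℝ) * Real.log (x ⟨d - 1, by omega⟩) +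
          (p' : ℝ) * Real.log (y ⟨d, by omega⟩) +
          (q' : ℝ) * Real.log (y ⟨n - 1, by omega⟩) +
          (r' : ℝ) * Real.log (x ⟨d, by omega⟩) := by
        rw [hwdef,
          Real.log_mul (by positivity) (by positivity),
          Real.log_mul (by positivity) (by positivity),
          Real.log_mul (by positivity) (by positivity),
          Real.log_mul (by positivity) (by positivity),
          Real.log_mul (by positivity) (by positivity),
          Real.log_pow, Real.log_pow, Real.log_pow, Real.log_pow, Real.log_pow,
          Real.log_pow]
      have hdivpos : 0 < θ / w := div_pos hθpos hwpos
      have hlogdiv : Real.log (θ / w) = Real.log θ - Real.log w :=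
        Real.log_div (ne_of_gt hθpos) (ne_of_gt hwpos)
      have hEd : 0 < Ed x y (θ / w) := by
        apply Ed_pos hxa hya (show 1 ≤ d by omega) (show d + 1 ≤ n by omega) hM hed hen hlt'
        rcases hdisj with ⟨h1, h2⟩ | ⟨h1, h2⟩
        · left
          constructor
          · apply (Real.log_lt_log_iff hβ hdivpos).1
            rw [hlogdiv, hlogw]
            linarith
          · apply (Real.log_lt_log_iff hdivpos hα).1
            rw [hlogdiv, hlogw]
            linarith
        · right
          constructor
          · apply (Real.log_lt_log_iff hδ hdivpos).1
            rw [hlogdiv, hlogw]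
            linarith
          · apply (Real.log_lt_log_iff hdivpos hγ).1
            rw [hlogdiv, hlogw]
            linarith
      obtain ⟨g, hgprod⟩ : ∃ g : Fin (r + r') → Fin n,
          (∏ j, x (g j)) = (x ⟨d - 1, by omega⟩) ^ r * (x ⟨d, by omega⟩) ^ r' := by
        interval_cases r <;> interval_cases r'
        · exact ⟨Fin.elim0, by simp⟩
        · refine ⟨fun _ => ⟨d, by omega⟩, ?_⟩
          rw [Fin.prod_univ_one]
          simp
        · refine ⟨fun _ => ⟨d - 1, by omega⟩, ?_⟩
          rw [Fin.prod_univ_one]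
          simp
        · refine ⟨![⟨d - 1, by omega⟩, ⟨d, by omega⟩], ?_⟩
          rw [Fin.prod_univ_two]
          simp
      have hθ4div : θ / (y ⟨0, by omega⟩) ^ p / (y ⟨d - 1, by omega⟩) ^ q /
          (y ⟨d, by omega⟩) ^ p' / (y ⟨n - 1, by omega⟩) ^ q' /
          ((x ⟨d - 1, by omega⟩) ^ r * (x ⟨d, by omega⟩) ^ r') = θ / w := by
        rw [div_div, div_div, div_div, div_div, hwdef]
        congr 1
        ring
      have s1 : 0 < Dlt x y ((r + r') + 1) (θ / (y ⟨0, by omega⟩) ^ p /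
          (y ⟨d - 1, by omega⟩) ^ q / (y ⟨d, by omega⟩) ^ p' /
          (y ⟨n - 1, by omega⟩) ^ q') := by
        have hstep := Dlt_Eterm hxpos hypos hM (r + r') g
          (θ / (y ⟨0, by omega⟩) ^ p / (y ⟨d - 1, by omega⟩) ^ q /
            (y ⟨d, by omega⟩) ^ p' / (y ⟨n - 1, by omega⟩) ^ q')
        rw [hgprod, hθ4div] at hstep
        have hpos0 : 0 < ((x ⟨d - 1, by omega⟩) ^ r * (x ⟨d, by omega⟩) ^ r') *
            Ed x y (θ / w) := mul_pos (by positivity) hEd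
        linarith
      have s2 : 0 < Dlt x y (q' + ((r + r') + 1)) (θ / (y ⟨0, by omega⟩) ^ p /
          (y ⟨d - 1, by omega⟩) ^ q / (y ⟨d, by omega⟩) ^ p') := by
        have hstep := Dlt_peelPow hxpos hypos hM ⟨n - 1, by omega⟩ q' ((r + r') + 1)
          (θ / (y ⟨0, by omega⟩) ^ p / (y ⟨d - 1, by omega⟩) ^ q / (y ⟨d, by omega⟩) ^ p')
        have hpos0 : 0 < (y ⟨n - 1, by omega⟩) ^ q' * Dlt x y ((r + r') + 1)
            (θ / (y ⟨0, by omega⟩) ^ p / (y ⟨d - 1, by omega⟩) ^ q /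
              (y ⟨d, by omega⟩) ^ p' / (y ⟨n - 1, by omega⟩) ^ q') :=
          mul_pos (pow_pos hδ _) s1
        linarith
      have s3 : 0 < Dlt x y (p' + (q' + ((r + r') + 1))) (θ / (y ⟨0, by omega⟩) ^ p /
          (y ⟨d - 1, by omega⟩) ^ q) := by
        have hstep := Dlt_peelPow hxpos hypos hM ⟨d, by omega⟩ p' (q' + ((r + r') + 1))
          (θ / (y ⟨0, by omega⟩) ^ p / (y ⟨d - 1, by omega⟩) ^ q)
        have hpos0 : 0 < (y ⟨d, by omega⟩) ^ p' * Dlt x y (q' + ((r + r') + 1))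
            (θ / (y ⟨0, by omega⟩) ^ p / (y ⟨d - 1, by omega⟩) ^ q /
              (y ⟨d, by omega⟩) ^ p') := mul_pos (pow_pos hγ _) s2
        linarith
      have s4 : 0 < Dlt x y (q + (p' + (q' + ((r + r') + 1))))
          (θ / (y ⟨0, by omega⟩) ^ p) := by
        have hstep := Dlt_peelPow hxpos hypos hM ⟨d - 1, by omega⟩ q
          (p' + (q' + ((r + r') + 1))) (θ / (y ⟨0, by omega⟩) ^ p)
        have hpos0 : 0 < (y ⟨d - 1, by omega⟩) ^ q * Dlt x y (p' + (q' + ((r + r') + 1)))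
            (θ / (y ⟨0, by omega⟩) ^ p / (y ⟨d - 1, by omega⟩) ^ q) :=
          mul_pos (pow_pos hβ _) s3
        linarith
      have s5 : 0 < Dlt x y (p + (q + (p' + (q' + ((r + r') + 1))))) θ := by
        have hstep := Dlt_peelPow hxpos hypos hM ⟨0, by omega⟩ p
          (q + (p' + (q' + ((r + r') + 1)))) θ
        have hpos0 : 0 < (y ⟨0, by omega⟩) ^ p * Dlt x y (q + (p' + (q' + ((r + r') + 1))))
            (θ / (y ⟨0, by omega⟩) ^ p) := mul_pos (pow_pos hα _) s4
        linarith
      rw [show p + (q + (p' + (q' + ((r + r') + 1)))) = k by omega] at s5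
      unfold Dlt at s5
      linarith

end
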